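/- arXiv:1306.1257 — 2 statements merged into one kernel-verified Lean document; each statement's English description precedes it below -/
import Mathlib

section
/- Let S and T be Steiner triple systems of orders m and n respectively. Then α(S×T) = 6·α(S)·β(T) + 6·β(S)·α(T) − 6·α(S)·α(T) + 6·C(n,2)·β(S) + 6·C(m,2)·β(T) + n·α(S) + m·α(T) + 4·C(m,2)·C(n,2). -/
set_option linter.unusedSectionVars false
set_option linter.unusedVariables false
set_option maxHeartbeats 4000000


/-- A Steiner quasigroup structure on `X`. -/
def IsSteinerQuasigroup {X : Type*} (star : X → X → X) : Prop :=
  (∀ a, star a a = a) ∧ (∀ a b, star a b = star b a) ∧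
    (∀ a b, star a (star a b) = b)

/-- The blocks of the Steiner triple system associated to a Steiner quasigroup:
the 3-element subsets `{a,b,c}` with `a,b,c` distinct and `a ⋆ b = c`. -/
def blocksOf {X : Type*} [DecidableEq X] (star : X → X → X) : Set (Finset X) :=
  {B | ∃ a b c : X, a ≠ b ∧ a ≠ c ∧ b ≠ c ∧ B = {a, b, c} ∧ star a b = c}

/-- `A(S) = {{a⋆b, b⋆c, c⋆a} : a,b,c pairwise distinct, {a,b,c} ∉ S}`. -/
def ASet {X : Type*} [DecidableEq X] (star : X → X → X) : Set (Finset X) :=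
  {B | ∃ a b c : X, a ≠ b ∧ a ≠ c ∧ b ≠ c ∧
    ({a, b, c} : Finset X) ∉ blocksOf star ∧
    B = {star a b, star b c, star c a}}

/-- `B(S) = {{a⋆b, b⋆c, c⋆a} : a,b,c pairwise distinct}`. -/
def BSet {X : Type*} [DecidableEq X] (star : X → X → X) : Set (Finset X) :=
  {B | ∃ a b c : X, a ≠ b ∧ a ≠ c ∧ b ≠ c ∧
    B = {star a b, star b c, star c a}}

/-- `α(S) = |A(S)|`. -/
noncomputable def alphaInv {X : Type*} [DecidableEq X] (star : X → X → X) : ℕ :=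
  (ASet star).ncard

/-- `β(S) = |B(S)|`. -/
noncomputable def betaInv {X : Type*} [DecidableEq X] (star : X → X → X) : ℕ :=
  (BSet star).ncard

/-- A pasch configuration: four blocks `{a,b,c}, {a,d,e}, {f,b,d}, {f,c,e}`
with `a,b,c,d,e,f` pairwise distinct. -/
def IsPasch {X : Type*} [DecidableEq X] (P : Set (Finset X)) : Prop :=
  ∃ a b c d e f : X, ([a, b, c, d, e, f] : List X).Pairwise (· ≠ ·) ∧
    P = {({a, b, c} : Finset X), {a, d, e}, {f, b, d}, {f, c, e}}

/-- A Steiner triple system is anti-pasch if it contains no pasch configuration. -/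
def IsAntiPasch {X : Type*} [DecidableEq X] (star : X → X → X) : Prop :=
  ∀ P : Set (Finset X), IsPasch P → ¬ P ⊆ blocksOf star



section Basic
variable {α : Type*} [DecidableEq α] {st : α → α → α}

lemma sq_idem (H : IsSteinerQuasigroup st) (a : α) : st a a = a := H.1 a
lemma sq_comm (H : IsSteinerQuasigroup st) (a b : α) : st a b = st b a := H.2.1 a b
lemma sq_inv (H : IsSteinerQuasigroup st) (a b : α) : st a (st a b) = b := H.2.2 a b

lemma sq_cancel (H : IsSteinerQuasigroup st) {a b c : α} (h : st a b = st a c) : b = c := by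
  have := congrArg (st a) h; rwa [sq_inv H, sq_inv H] at this

lemma sq_eq_left (H : IsSteinerQuasigroup st) {a b : α} : st a b = a ↔ b = a := by
  constructor
  · intro h; have : st a b = st a a := by rw [h, sq_idem H]
    exact sq_cancel H this
  · rintro rfl; exact sq_idem H _

lemma sq_eq_right (H : IsSteinerQuasigroup st) {a b : α} : st a b = b ↔ a = b := by
  rw [sq_comm H, sq_eq_left H]

lemma sq_ne12 (H : IsSteinerQuasigroup st) {a b c : α} (hac : a ≠ c) :
    st a b ≠ st b c := by
  intro h; rw [sq_comm H a b] at h; exact hac (sq_cancel H h)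

lemma sq_ne13 (H : IsSteinerQuasigroup st) {a b c : α} (hbc : b ≠ c) :
    st a b ≠ st c a := by
  intro h; rw [sq_comm H c a] at h; exact hbc (sq_cancel H h)

lemma block_perm (H : IsSteinerQuasigroup st) {a b c : α} (h : st a b = c) :
    st b a = c ∧ st a c = b ∧ st c a = b ∧ st b c = a ∧ st c b = a := by
  have e2 : st b a = c := by rw [sq_comm H]; exact h
  have e3 : st a c = b := by rw [← h, sq_inv H]
  have e5 : st b c = a := by rw [← e2, sq_inv H]
  exact ⟨e2, e3, by rw [sq_comm H]; exact e3, e5, by rw [sq_comm H]; exact e5⟩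

lemma mem_blocks_iff (H : IsSteinerQuasigroup st) {a b c : α}
    (hab : a ≠ b) (hac : a ≠ c) (hbc : b ≠ c) :
    ({a, b, c} : Finset α) ∈ blocksOf st ↔ st a b = c := by
  constructor
  · rintro ⟨a', b', c', h1, h2, h3, heq, hst⟩
    obtain ⟨e2, e3, e4, e5, e6⟩ := block_perm H hst
    have closure : ∀ x ∈ ({a', b', c'} : Finset α), ∀ y ∈ ({a', b', c'} : Finset α),
        x ≠ y → st x y ∈ ({a', b', c'} : Finset α) := by
      intro x hx y hy hxy
      simp only [Finset.mem_insert, Finset.mem_singleton] at hx hy ⊢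
      rcases hx with rfl | rfl | rfl <;> rcases hy with rfl | rfl | rfl <;>
        simp_all
    have ha : a ∈ ({a', b', c'} : Finset α) := by rw [← heq]; simp
    have hb : b ∈ ({a', b', c'} : Finset α) := by rw [← heq]; simp
    have hmem : st a b ∈ ({a, b, c} : Finset α) := by
      rw [heq]; exact closure a ha b hb hab
    simp only [Finset.mem_insert, Finset.mem_singleton] at hmem
    rcases hmem with h | h | h
    · exact absurd ((sq_eq_left H).mp h) (Ne.symm hab)
    · exact absurd ((sq_eq_right H).mp h) hab
    · exact h
  · intro h; exact ⟨a, b, c, hab, hac, hbc, rfl, h⟩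

lemma finset_triple_cases {a b c d e f : α}
    (h : ({a, b, c} : Finset α) = {d, e, f}) (hab : a ≠ b) (hac : a ≠ c) (hbc : b ≠ c) :
    (a = d ∧ b = e ∧ c = f) ∨ (a = d ∧ b = f ∧ c = e) ∨ (a = e ∧ b = d ∧ c = f) ∨
    (a = e ∧ b = f ∧ c = d) ∨ (a = f ∧ b = d ∧ c = e) ∨ (a = f ∧ b = e ∧ c = d) := by
  have ha : a = d ∨ a = e ∨ a = f := by
    have : a ∈ ({d, e, f} : Finset α) := h ▸ (by simp)
    simpa using this
  have hb : b = d ∨ b = e ∨ b = f := by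
    have : b ∈ ({d, e, f} : Finset α) := h ▸ (by simp)
    simpa using this
  have hc : c = d ∨ c = e ∨ c = f := by
    have : c ∈ ({d, e, f} : Finset α) := h ▸ (by simp)
    simpa using this
  have hd : d ∈ ({a, b, c} : Finset α) := h ▸ (by simp)
  simp only [Finset.mem_insert, Finset.mem_singleton] at hd
  rcases ha with rfl | rfl | rfl <;> rcases hb with rfl | rfl | rfl <;>
    rcases hc with rfl | rfl | rfl <;> simp_all

end Basic

section SetLemmas
variable {α : Type*} [DecidableEq α] {st : α → α → α}

lemma notMem_blocks_iff (H : IsSteinerQuasigroup st) {a b c : α}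
    (hab : a ≠ b) (hac : a ≠ c) (hbc : b ≠ c) :
    ({a, b, c} : Finset α) ∉ blocksOf st ↔ st a b ≠ c :=
  not_congr (mem_blocks_iff H hab hac hbc)

lemma ASet_subset_BSet : ASet st ⊆ BSet st := by
  rintro W ⟨a, b, c, h1, h2, h3, _, h5⟩; exact ⟨a, b, c, h1, h2, h3, h5⟩

lemma BSet_card (H : IsSteinerQuasigroup st) {W : Finset α} (hW : W ∈ BSet st) :
    W.card = 3 := by
  obtain ⟨a, b, c, hab, hac, hbc, rfl⟩ := hW
  exact Finset.card_eq_three.mpr ⟨_, _, _, sq_ne12 H hac, sq_ne13 H hbc,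
    sq_ne12 H (Ne.symm hab), rfl⟩

lemma triple_comm_aux {a b c : α} : ({a, b, c} : Finset α) = {b, a, c} := by
  ext x; simp; tauto

lemma triple_rot_aux {a b c : α} : ({a, b, c} : Finset α) = {c, a, b} := by
  ext x; simp; tauto

lemma ordered_preimage_B (H : IsSteinerQuasigroup st) {w1 w2 w3 : α}
    (hW : ({w1, w2, w3} : Finset α) ∈ BSet st) :
    ∃ a b c : α, a ≠ b ∧ a ≠ c ∧ b ≠ c ∧
      st a b = w1 ∧ st b c = w2 ∧ st c a = w3 := by
  obtain ⟨a, b, c, hab, hac, hbc, heq⟩ := hW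
  have hcases := finset_triple_cases heq.symm (sq_ne12 H hac) (sq_ne13 H hbc)
    (sq_ne12 H (Ne.symm hab))
  rcases hcases with ⟨e1,e2,e3⟩|⟨e1,e2,e3⟩|⟨e1,e2,e3⟩|⟨e1,e2,e3⟩|⟨e1,e2,e3⟩|⟨e1,e2,e3⟩
  · exact ⟨a, b, c, hab, hac, hbc, e1, e2, e3⟩
  · exact ⟨b, a, c, hab.symm, hbc, hac, by rw [sq_comm H]; exact e1,
      by rw [sq_comm H]; exact e3, by rw [sq_comm H]; exact e2⟩
  · exact ⟨c, b, a, hbc.symm, hac.symm, hab.symm, by rw [sq_comm H]; exact e2,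
      by rw [sq_comm H]; exact e1, by rw [sq_comm H]; exact e3⟩
  · exact ⟨c, a, b, hac.symm, hbc.symm, hab, e3, e1, e2⟩
  · exact ⟨b, c, a, hbc, hab.symm, hac.symm, e2, e3, e1⟩
  · exact ⟨a, c, b, hac, hab, hbc.symm, by rw [sq_comm H]; exact e3,
      by rw [sq_comm H]; exact e2, by rw [sq_comm H]; exact e1⟩

lemma ordered_preimage_A (H : IsSteinerQuasigroup st) {w1 w2 w3 : α}
    (hW : ({w1, w2, w3} : Finset α) ∈ ASet st) :
    ∃ a b c : α, a ≠ b ∧ a ≠ c ∧ b ≠ c ∧ ({a,b,c} : Finset α) ∉ blocksOf st ∧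
      st a b = w1 ∧ st b c = w2 ∧ st c a = w3 := by
  obtain ⟨a, b, c, hab, hac, hbc, hnb, heq⟩ := hW
  have hcases := finset_triple_cases heq.symm (sq_ne12 H hac) (sq_ne13 H hbc)
    (sq_ne12 H (Ne.symm hab))
  have hnb2 : ∀ x y z : α, ({x,y,z} : Finset α) = {a,b,c} →
      ({x,y,z} : Finset α) ∉ blocksOf st := by
    intro x y z h hmem; rw [h] at hmem; exact hnb hmem
  rcases hcases with ⟨e1,e2,e3⟩|⟨e1,e2,e3⟩|⟨e1,e2,e3⟩|⟨e1,e2,e3⟩|⟨e1,e2,e3⟩|⟨e1,e2,e3⟩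
  · exact ⟨a, b, c, hab, hac, hbc, hnb, e1, e2, e3⟩
  · exact ⟨b, a, c, hab.symm, hbc, hac, hnb2 _ _ _ (by ext x; simp; tauto),
      by rw [sq_comm H]; exact e1, by rw [sq_comm H]; exact e3,
      by rw [sq_comm H]; exact e2⟩
  · exact ⟨c, b, a, hbc.symm, hac.symm, hab.symm, hnb2 _ _ _ (by ext x; simp; tauto),
      by rw [sq_comm H]; exact e2, by rw [sq_comm H]; exact e1,
      by rw [sq_comm H]; exact e3⟩
  · exact ⟨c, a, b, hac.symm, hbc.symm, hab, hnb2 _ _ _ (by ext x; simp; tauto),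
      e3, e1, e2⟩
  · exact ⟨b, c, a, hbc, hab.symm, hac.symm, hnb2 _ _ _ (by ext x; simp; tauto),
      e2, e3, e1⟩
  · exact ⟨a, c, b, hac, hab, hbc.symm, hnb2 _ _ _ (by ext x; simp; tauto),
      by rw [sq_comm H]; exact e3, by rw [sq_comm H]; exact e2,
      by rw [sq_comm H]; exact e1⟩

end SetLemmas

section Classes
variable {α β : Type*} [DecidableEq α] [DecidableEq β]

def pStar (s1 : α → α → α) (s2 : β → β → β) : α × β → α × β → α × β :=
  fun p q => (s1 p.1 q.1, s2 p.2 q.2)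

variable (s1 : α → α → α) (s2 : β → β → β)

lemma pStar_steiner (H1 : IsSteinerQuasigroup s1) (H2 : IsSteinerQuasigroup s2) :
    IsSteinerQuasigroup (pStar s1 s2) := by
  refine ⟨fun p => ?_, fun p q => ?_, fun p q => ?_⟩
  · simp [pStar, H1.1, H2.1]
  · simp only [pStar]; rw [H1.2.1, H2.2.1]
  · simp only [pStar]; rw [H1.2.2, H2.2.2]

def Cls13 : Set (Finset (α × β)) :=
  {E | ∃ a : α, ∃ w ∈ ASet s2, E = w.image (fun y => (a, y))}

def Cls31 : Set (Finset (α × β)) :=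
  {E | ∃ y : β, ∃ w ∈ ASet s1, E = w.image (fun u => (u, y))}

def Cls22 : Set (Finset (α × β)) :=
  {E | ∃ a u : α, ∃ s t : β, a ≠ u ∧ s ≠ t ∧ E = {(a,s),(u,s),(u,t)}}

def Cls23 : Set (Finset (α × β)) :=
  {E | ∃ a u : α, a ≠ u ∧ ∃ v1 v2 v3 : β, v1 ≠ v2 ∧ v1 ≠ v3 ∧ v2 ≠ v3 ∧
    ({v1,v2,v3} : Finset β) ∈ BSet s2 ∧ E = {(a,v1),(u,v2),(u,v3)}}

def Cls32 : Set (Finset (α × β)) :=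
  {E | ∃ s t : β, s ≠ t ∧ ∃ u1 u2 u3 : α, u1 ≠ u2 ∧ u1 ≠ u3 ∧ u2 ≠ u3 ∧
    ({u1,u2,u3} : Finset α) ∈ BSet s1 ∧ E = {(u1,t),(u2,s),(u3,s)}}

def Cls33 : Set (Finset (α × β)) :=
  {E | ∃ u1 u2 u3 : α, ∃ v1 v2 v3 : β, u1 ≠ u2 ∧ u1 ≠ u3 ∧ u2 ≠ u3 ∧
    v1 ≠ v2 ∧ v1 ≠ v3 ∧ v2 ≠ v3 ∧
    (({u1,u2,u3} : Finset α) ∈ ASet s1 ∧ ({v1,v2,v3} : Finset β) ∈ BSet s2 ∨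
     ({u1,u2,u3} : Finset α) ∈ BSet s1 ∧ ({v1,v2,v3} : Finset β) ∈ ASet s2) ∧
    E = {(u1,v1),(u2,v2),(u3,v3)}}

end Classes





section Decomp
variable {α β : Type*} [DecidableEq α] [DecidableEq β]
variable (s1 : α → α → α) (s2 : β → β → β)

def ClsUnion : Set (Finset (α × β)) :=
  Cls13 (α := α) s2 ∪ Cls31 (β := β) s1 ∪ Cls22 ∪ Cls23 (α := α) s2 ∪
    Cls32 (β := β) s1 ∪ Cls33 s1 s2

variable {s1 s2}

theorem ASet_pStar_subset (H1 : IsSteinerQuasigroup s1) (H2 : IsSteinerQuasigroup s2) :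
    ASet (pStar s1 s2) ⊆ ClsUnion s1 s2 := by
  have HP := pStar_steiner s1 s2 H1 H2
  rintro E ⟨⟨a, x⟩, ⟨b, y⟩, ⟨c, z⟩, hpq, hpr, hqr, hnb, rfl⟩
  have hnb' : ¬(s1 a b = c ∧ s2 x y = z) := by
    intro h
    exact hnb ((mem_blocks_iff HP hpq hpr hqr).mpr (by simp [pStar, Prod.ext_iff, h.1, h.2]))
  simp only [ClsUnion, Set.mem_union]
  by_cases hab : a = b
  · subst hab
    by_cases hac : a = c
    · subst hac
      -- Cls13
      have hxy : x ≠ y := by simpa using hpq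
      have hxz : x ≠ z := by simpa using hpr
      have hyz : y ≠ z := by simpa using hqr
      refine Or.inl (Or.inl (Or.inl (Or.inl (Or.inl ?_))))
      refine ⟨a, {s2 x y, s2 y z, s2 z x}, ⟨x, y, z, hxy, hxz, hyz, ?_, rfl⟩, ?_⟩
      · rw [notMem_blocks_iff H2 hxy hxz hyz]
        exact fun h => hnb' ⟨H1.1 a, h⟩
      · simp [pStar, H1.1 a]
    · -- a = b ≠ c
      have hxy : x ≠ y := by simpa using hpq
      have hua : s1 a c ≠ a := fun h => hac ((sq_eq_left H1).mp h).symm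
      by_cases hzx : z = x
      · subst hzx
        refine Or.inl (Or.inl (Or.inl (Or.inr ?_)))
        refine ⟨a, s1 a c, s2 z y, z, Ne.symm hua,
          fun h => hxy ((sq_eq_left H2).mp h).symm, ?_⟩
        ext p
        simp [pStar, H1.1, H2.1, sq_comm H1 c a, sq_comm H2 y z]
        try tauto
      · by_cases hzy : z = y
        · subst hzy
          refine Or.inl (Or.inl (Or.inl (Or.inr ?_)))
          refine ⟨a, s1 a c, s2 x z, z, Ne.symm hua,
            fun h => hxy ((sq_eq_right H2).mp h), ?_⟩
          ext p
          simp [pStar, H1.1, H2.1, sq_comm H1 c a, sq_comm H2 z x]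
          try tauto
        · -- Cls23
          have hxz : x ≠ z := fun h => hzx h.symm
          have hyz : y ≠ z := fun h => hzy h.symm
          refine Or.inl (Or.inl (Or.inr ?_))
          refine ⟨a, s1 a c, Ne.symm hua, s2 x y, s2 y z, s2 z x,
            sq_ne12 H2 hxz, sq_ne13 H2 hyz, sq_ne12 H2 (Ne.symm hxy),
            ⟨x, y, z, hxy, hxz, hyz, rfl⟩, ?_⟩
          ext p
          simp [pStar, H1.1, sq_comm H1 c a]
          try tauto
  · by_cases hac : a = c
    · subst hac
      -- a = c ≠ b
      have hxz : x ≠ z := by simpa using hpr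
      have hua : s1 a b ≠ a := fun h => hab ((sq_eq_left H1).mp h).symm
      by_cases hyx : y = x
      · subst hyx
        refine Or.inl (Or.inl (Or.inl (Or.inr ?_)))
        refine ⟨a, s1 a b, s2 y z, y, Ne.symm hua,
          fun h => hxz ((sq_eq_left H2).mp h).symm, ?_⟩
        ext p
        simp [pStar, H1.1, H2.1, sq_comm H1 b a, sq_comm H2 z y]
        try tauto
      · by_cases hyz : y = z
        · subst hyz
          refine Or.inl (Or.inl (Or.inl (Or.inr ?_)))
          refine ⟨a, s1 a b, s2 x y, y, Ne.symm hua,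
            fun h => hxz (((sq_eq_right H2).mp h)), ?_⟩
          ext p
          simp [pStar, H1.1, H2.1, sq_comm H1 b a, sq_comm H2 y x]
          try tauto
        · -- Cls23
          have hxy : x ≠ y := fun h => hyx h.symm
          refine Or.inl (Or.inl (Or.inr ?_))
          refine ⟨a, s1 a b, Ne.symm hua, s2 z x, s2 x y, s2 y z,
            sq_ne12 H2 (fun h => hyz h.symm), sq_ne13 H2 hxy, sq_ne12 H2 hxz,
            ⟨z, x, y, Ne.symm hxz, fun h => hyz h.symm, hxy, rfl⟩, ?_⟩
          ext p
          simp [pStar, H1.1, sq_comm H1 b a]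
          try tauto
    · by_cases hbc : b = c
      · subst hbc
        -- b = c ≠ a
        have hyz : y ≠ z := by simpa using hqr
        have hub : s1 a b ≠ b := fun h => hab ((sq_eq_right H1).mp h)
        by_cases hxy : x = y
        · subst hxy
          refine Or.inl (Or.inl (Or.inl (Or.inr ?_)))
          refine ⟨b, s1 a b, s2 x z, x, Ne.symm hub,
            fun h => hyz (((sq_eq_left H2).mp h) ▸ rfl), ?_⟩
          ext p
          simp [pStar, H1.1, H2.1, sq_comm H1 b a, sq_comm H2 z x]
          try tauto
        · by_cases hxz : x = z
          · subst hxz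
            refine Or.inl (Or.inl (Or.inl (Or.inr ?_)))
            refine ⟨b, s1 a b, s2 y x, x, Ne.symm hub,
              fun h => hyz ((sq_eq_right H2).mp h ▸ rfl), ?_⟩
            ext p
            simp [pStar, H1.1, H2.1, sq_comm H1 b a, sq_comm H2 x y]
            try tauto
          · -- Cls23
            refine Or.inl (Or.inl (Or.inr ?_))
            refine ⟨b, s1 a b, Ne.symm hub, s2 y z, s2 x y, s2 z x,
              Ne.symm (sq_ne12 H2 hxz), sq_ne12 H2 (fun h => hxy h.symm),
              sq_ne13 H2 hyz,
              ⟨y, z, x, hyz, fun h => hxy h.symm, fun h => hxz h.symm, by ext p; simp; tauto⟩, ?_⟩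
            ext p
            simp [pStar, H1.1, sq_comm H1 b a]
            try tauto
      · -- a, b, c pairwise distinct
        have d12 : s1 a b ≠ s1 b c := sq_ne12 H1 hac
        have d13 : s1 a b ≠ s1 c a := sq_ne13 H1 hbc
        have d23 : s1 b c ≠ s1 c a := sq_ne12 H1 (Ne.symm hab)
        by_cases hxy : x = y
        · subst hxy
          by_cases hxz : x = z
          · subst hxz
            -- Cls31
            refine Or.inl (Or.inl (Or.inl (Or.inl (Or.inr ?_))))
            refine ⟨x, {s1 a b, s1 b c, s1 c a}, ⟨a, b, c, hab, hac, hbc, ?_, rfl⟩, ?_⟩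
            · rw [notMem_blocks_iff H1 hab hac hbc]
              exact fun h => hnb' ⟨h, H2.1 x⟩
            · simp [pStar, H2.1 x]
          · -- x = y ≠ z : Cls32
            refine Or.inl (Or.inr ?_)
            refine ⟨s2 x z, x, fun h => hxz ((sq_eq_left H2).mp h).symm,
              s1 a b, s1 b c, s1 c a, d12, d13, d23,
              ⟨a, b, c, hab, hac, hbc, rfl⟩, ?_⟩
            ext p
            simp [pStar, H2.1, sq_comm H2 z x]
            try tauto
        · by_cases hyz : y = z
          · subst hyz
            -- y = z ≠ x : Cls32
            refine Or.inl (Or.inr ?_)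
            refine ⟨s2 x y, y, fun h => hxy ((sq_eq_right H2).mp h),
              s1 b c, s1 a b, s1 c a, Ne.symm d12, d23, d13,
              ⟨a, b, c, hab, hac, hbc, by ext p; simp; tauto⟩, ?_⟩
            ext p
            simp [pStar, H2.1, sq_comm H2 y x]
            try tauto
          · by_cases hxz : x = z
            · subst hxz
              -- z = x ≠ y : Cls32
              refine Or.inl (Or.inr ?_)
              refine ⟨s2 x y, x, fun h => hxy ((sq_eq_left H2).mp h).symm,
                s1 c a, s1 a b, s1 b c, Ne.symm d13, Ne.symm d23, d12,
                ⟨c, a, b, Ne.symm hac, Ne.symm hbc, hab, rfl⟩, ?_⟩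
              ext p
              simp [pStar, H2.1, sq_comm H2 y x]
              try tauto
            · -- Cls33
              have e12 : s2 x y ≠ s2 y z := sq_ne12 H2 hxz
              have e13 : s2 x y ≠ s2 z x := sq_ne13 H2 hyz
              have e23 : s2 y z ≠ s2 z x := sq_ne12 H2 (Ne.symm hxy)
              refine Or.inr ?_
              refine ⟨s1 a b, s1 b c, s1 c a, s2 x y, s2 y z, s2 z x,
                d12, d13, d23, e12, e13, e23, ?_, by simp [pStar]⟩
              by_cases hblk : s1 a b = c
              · refine Or.inr ⟨⟨a, b, c, hab, hac, hbc, rfl⟩,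
                  ⟨x, y, z, hxy, fun h => hxz h, hyz, ?_, rfl⟩⟩
                rw [notMem_blocks_iff H2 hxy hxz hyz]
                exact fun h => hnb' ⟨hblk, h⟩
              · exact Or.inl ⟨⟨a, b, c, hab, hac, hbc,
                  (notMem_blocks_iff H1 hab hac hbc).mpr hblk, rfl⟩,
                  ⟨x, y, z, hxy, hxz, hyz, rfl⟩⟩

end Decomp

section Rev
variable {α β : Type*} [DecidableEq α] [DecidableEq β]
variable {s1 : α → α → α} {s2 : β → β → β}
variable (H1 : IsSteinerQuasigroup s1) (H2 : IsSteinerQuasigroup s2)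
include H1 H2

theorem Cls13_subset : Cls13 (α := α) s2 ⊆ ASet (pStar s1 s2) := by
  have HP := pStar_steiner s1 s2 H1 H2
  rintro E ⟨a, w, ⟨x, y, z, hxy, hxz, hyz, hnbw, rfl⟩, rfl⟩
  refine ⟨(a,x), (a,y), (a,z), by simp [hxy], by simp [hxz], by simp [hyz], ?_, ?_⟩
  · rw [notMem_blocks_iff HP (by simp [hxy]) (by simp [hxz]) (by simp [hyz])]
    intro h
    simp only [pStar, Prod.mk.injEq, H1.1] at h
    exact (notMem_blocks_iff H2 hxy hxz hyz).mp hnbw h.2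
  · simp [pStar, H1.1]

theorem Cls31_subset : Cls31 (β := β) s1 ⊆ ASet (pStar s1 s2) := by
  have HP := pStar_steiner s1 s2 H1 H2
  rintro E ⟨y, w, ⟨a, b, c, hab, hac, hbc, hnbw, rfl⟩, rfl⟩
  refine ⟨(a,y), (b,y), (c,y), by simp [hab], by simp [hac], by simp [hbc], ?_, ?_⟩
  · rw [notMem_blocks_iff HP (by simp [hab]) (by simp [hac]) (by simp [hbc])]
    intro h
    simp only [pStar, Prod.mk.injEq, H2.1] at h
    exact (notMem_blocks_iff H1 hab hac hbc).mp hnbw h.1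
  · simp [pStar, H2.1]

theorem Cls22_subset : Cls22 (α := α) (β := β) ⊆ ASet (pStar s1 s2) := by
  have HP := pStar_steiner s1 s2 H1 H2
  rintro E ⟨a, u, s, t, hau, hst, rfl⟩
  have hca : s1 a u ≠ a := fun h => hau ((sq_eq_left H1).mp h).symm
  have hyt : s2 t s ≠ t := fun h => hst ((sq_eq_left H2).mp h)
  refine ⟨(a,t), (a, s2 t s), (s1 a u, t), by simp [hyt.symm], by simp [hca.symm],
    by simp [hca.symm], ?_, ?_⟩
  · rw [notMem_blocks_iff HP (by simp [hyt.symm]) (by simp [hca.symm]) (by simp [hca.symm])]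
    intro h
    simp only [pStar, Prod.mk.injEq, H1.1] at h
    exact hca h.1.symm
  · ext p
    simp [pStar, H1.1, H2.1, sq_inv H1, sq_inv H2,
      sq_comm H1 (s1 a u) a, sq_comm H2 (s2 t s) t]
    try tauto

theorem Cls23_subset : Cls23 (α := α) s2 ⊆ ASet (pStar s1 s2) := by
  have HP := pStar_steiner s1 s2 H1 H2
  rintro E ⟨a, u, hau, v1, v2, v3, d12, d13, d23, hV, rfl⟩
  obtain ⟨x, y, z, hxy, hxz, hyz, e1, e2, e3⟩ := ordered_preimage_B H2 hV
  have hca : s1 a u ≠ a := fun h => hau ((sq_eq_left H1).mp h).symm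
  refine ⟨(a,x), (a,y), (s1 a u, z), by simp [hxy], by simp [hca.symm],
    by simp [hca.symm], ?_, ?_⟩
  · rw [notMem_blocks_iff HP (by simp [hxy]) (by simp [hca.symm]) (by simp [hca.symm])]
    intro h
    simp only [pStar, Prod.mk.injEq, H1.1] at h
    exact hca h.1.symm
  · ext p
    simp [pStar, H1.1, sq_inv H1, sq_comm H1 (s1 a u) a, e1, e2, e3]
    try tauto

theorem Cls32_subset : Cls32 (β := β) s1 ⊆ ASet (pStar s1 s2) := by
  have HP := pStar_steiner s1 s2 H1 H2
  rintro E ⟨s, t, hst, u1, u2, u3, d12, d13, d23, hU, rfl⟩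
  obtain ⟨a, b, c, hab, hac, hbc, e1, e2, e3⟩ := ordered_preimage_B H1 hU
  have hyt : s2 t s ≠ t := fun h => hst ((sq_eq_left H2).mp h)
  refine ⟨(a,t), (b,t), (c, s2 t s), by simp [hab], by simp [hac], by simp [hbc], ?_, ?_⟩
  · rw [notMem_blocks_iff HP (by simp [hab]) (by simp [hac]) (by simp [hbc])]
    intro h
    simp only [pStar, Prod.mk.injEq, H2.1] at h
    exact hyt h.2.symm
  · ext p
    simp [pStar, H2.1, sq_inv H2, sq_comm H2 (s2 t s) t, e1, e2, e3]
    try tauto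

theorem Cls33_subset : Cls33 s1 s2 ⊆ ASet (pStar s1 s2) := by
  have HP := pStar_steiner s1 s2 H1 H2
  rintro E ⟨u1, u2, u3, v1, v2, v3, d12, d13, d23, e12, e13, e23, hD, rfl⟩
  rcases hD with ⟨hUA, hVB⟩ | ⟨hUB, hVA⟩
  · obtain ⟨a, b, c, hab, hac, hbc, hnbU, f1, f2, f3⟩ := ordered_preimage_A H1 hUA
    obtain ⟨x, y, z, hxy, hxz, hyz, g1, g2, g3⟩ := ordered_preimage_B H2 hVB
    refine ⟨(a,x), (b,y), (c,z), by simp [hab], by simp [hac], by simp [hbc], ?_, ?_⟩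
    · rw [notMem_blocks_iff HP (by simp [hab]) (by simp [hac]) (by simp [hbc])]
      intro h
      simp only [pStar, Prod.mk.injEq] at h
      exact hnbU ((mem_blocks_iff H1 hab hac hbc).mpr h.1)
    · simp [pStar, f1, f2, f3, g1, g2, g3]
  · obtain ⟨a, b, c, hab, hac, hbc, f1, f2, f3⟩ := ordered_preimage_B H1 hUB
    obtain ⟨x, y, z, hxy, hxz, hyz, hnbV, g1, g2, g3⟩ := ordered_preimage_A H2 hVA
    refine ⟨(a,x), (b,y), (c,z), by simp [hab], by simp [hac], by simp [hbc], ?_, ?_⟩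
    · rw [notMem_blocks_iff HP (by simp [hab]) (by simp [hac]) (by simp [hbc])]
      intro h
      simp only [pStar, Prod.mk.injEq] at h
      exact hnbV ((mem_blocks_iff H2 hxy hxz hyz).mpr h.2)
    · simp [pStar, f1, f2, f3, g1, g2, g3]

theorem ASet_pStar_eq : ASet (pStar s1 s2) = ClsUnion s1 s2 := by
  apply Set.Subset.antisymm (ASet_pStar_subset H1 H2)
  simp only [ClsUnion]
  intro E hE
  rcases hE with ((((h | h) | h) | h) | h) | h
  · exact Cls13_subset H1 H2 h
  · exact Cls31_subset H1 H2 h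
  · exact Cls22_subset H1 H2 h
  · exact Cls23_subset H1 H2 h
  · exact Cls32_subset H1 H2 h
  · exact Cls33_subset H1 H2 h

end Rev





lemma ASet_mem_card {β : Type*} [DecidableEq β] {s2 : β → β → β}
    (H2 : IsSteinerQuasigroup s2) {w : Finset β} (hw : w ∈ ASet s2) :
    w.card = 3 := BSet_card H2 (ASet_subset_BSet hw)

section Counts
variable {α β : Type*} [DecidableEq α] [DecidableEq β] [Fintype α] [Fintype β]
variable {s1 : α → α → α} {s2 : β → β → β}

lemma count13 (H2 : IsSteinerQuasigroup s2) :
    (Cls13 (α := α) s2).ncard = Fintype.card α * alphaInv s2 := by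
  classical
  have hA : (ASet s2).Finite := Set.toFinite _
  have himg : Cls13 (α := α) s2 =
      (fun p : α × Finset β => p.2.image (fun y => (p.1, y))) ''
        ↑((Finset.univ : Finset α) ×ˢ hA.toFinset) := by
    ext E
    constructor
    · rintro ⟨a, w, hw, rfl⟩
      exact ⟨(a, w), Finset.mem_coe.mpr (Finset.mem_product.mpr
        ⟨Finset.mem_univ _, hA.mem_toFinset.mpr hw⟩), rfl⟩
    · rintro ⟨⟨a, w⟩, hmem, rfl⟩
      simp only [Finset.coe_product, Set.mem_prod, Finset.mem_coe,
        hA.mem_toFinset] at hmem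
      exact ⟨a, w, hmem.2, rfl⟩
  have hinj : Set.InjOn (fun p : α × Finset β => p.2.image (fun y => (p.1, y)))
      ↑((Finset.univ : Finset α) ×ˢ hA.toFinset) := by
    rintro ⟨a, w⟩ hmem ⟨a', w'⟩ hmem' heq
    simp only [Finset.coe_product, Set.mem_prod, Finset.mem_coe,
      hA.mem_toFinset] at hmem hmem'
    simp only at heq
    have hw3 : w.card = 3 := ASet_mem_card H2 hmem.2
    obtain ⟨y, hy⟩ : w.Nonempty := Finset.card_pos.mp (by omega)
    have h1 : (a, y) ∈ w'.image (fun y => (a', y)) := by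
      rw [← heq]; exact Finset.mem_image_of_mem _ hy
    simp only [Finset.mem_image] at h1
    obtain ⟨y', hy', h2⟩ := h1
    have haa : a' = a := congrArg Prod.fst h2
    subst haa
    have hww : w = w' :=
      Finset.image_injective (fun y1 y2 h => congrArg Prod.snd h) heq
    rw [hww]
  rw [himg, Set.ncard_image_of_injOn hinj, Set.ncard_coe_finset,
    Finset.card_product, Finset.card_univ, alphaInv,
    Set.ncard_eq_toFinset_card _ hA]

lemma Cls31_eq_swap :
    Cls31 (β := β) s1 = (fun E : Finset (β × α) => E.image Prod.swap) '' Cls13 (α := β) s1 := by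
  ext E
  constructor
  · rintro ⟨y, w, hw, rfl⟩
    refine ⟨w.image (fun u => (y, u)), ⟨y, w, hw, rfl⟩, ?_⟩
    simp only [Finset.image_image]
    rfl
  · rintro ⟨F, ⟨y, w, hw, rfl⟩, rfl⟩
    refine ⟨y, w, hw, ?_⟩
    simp only [Finset.image_image]
    rfl

lemma count31 (H1 : IsSteinerQuasigroup s1) :
    (Cls31 (β := β) s1).ncard = Fintype.card β * alphaInv s1 := by
  rw [Cls31_eq_swap,
    Set.ncard_image_of_injOn ((Finset.image_injective Prod.swap_injective).injOn)]
  exact count13 H1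

lemma count22 :
    (Cls22 (α := α) (β := β)).ncard =
      (Fintype.card α * Fintype.card α - Fintype.card α) *
        (Fintype.card β * Fintype.card β - Fintype.card β) := by
  classical
  have himg : Cls22 (α := α) (β := β) =
      (fun q : (α × α) × (β × β) => ({(q.1.1, q.2.1), (q.1.2, q.2.1), (q.1.2, q.2.2)} :
          Finset (α × β))) ''
        ↑((Finset.univ : Finset α).offDiag ×ˢ (Finset.univ : Finset β).offDiag) := by
    ext E
    constructor
    · rintro ⟨a, u, s, t, hau, hst, rfl⟩
      exact ⟨((a, u), (s, t)), Finset.mem_coe.mpr (Finset.mem_product.mpr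
        ⟨Finset.mem_offDiag.mpr ⟨Finset.mem_univ _, Finset.mem_univ _, hau⟩,
         Finset.mem_offDiag.mpr ⟨Finset.mem_univ _, Finset.mem_univ _, hst⟩⟩), rfl⟩
    · rintro ⟨⟨⟨a, u⟩, ⟨s, t⟩⟩, hmem, rfl⟩
      simp only [Finset.coe_product, Set.mem_prod, Finset.mem_coe,
        Finset.mem_offDiag] at hmem
      exact ⟨a, u, s, t, hmem.1.2.2, hmem.2.2.2, rfl⟩
  have hinj : Set.InjOn (fun q : (α × α) × (β × β) =>
      ({(q.1.1, q.2.1), (q.1.2, q.2.1), (q.1.2, q.2.2)} : Finset (α × β)))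
      ↑((Finset.univ : Finset α).offDiag ×ˢ (Finset.univ : Finset β).offDiag) := by
    rintro ⟨⟨a, u⟩, ⟨s, t⟩⟩ hmem ⟨⟨a', u'⟩, ⟨s', t'⟩⟩ hmem' heq
    simp only [Finset.coe_product, Set.mem_prod, Finset.mem_coe,
      Finset.mem_offDiag] at hmem hmem'
    have hau : a ≠ u := hmem.1.2.2
    have hst : s ≠ t := hmem.2.2.2
    have hau' : a' ≠ u' := hmem'.1.2.2
    have hst' : s' ≠ t' := hmem'.2.2.2
    simp only at heq
    have hus := (Finset.ext_iff.mp heq (u, s)).mp (by simp)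
    have hut := (Finset.ext_iff.mp heq (u, t)).mp (by simp)
    have has := (Finset.ext_iff.mp heq (a, s)).mp (by simp)
    simp only [Finset.mem_insert, Finset.mem_singleton, Prod.mk.injEq] at hus hut has
    have huu : u = u' := by
      by_contra hne
      have h1 : u = a' ∧ s = s' := by tauto
      have h2 : u = a' ∧ t = s' := by tauto
      exact hst (h1.2.trans h2.2.symm)
    subst huu
    have haa : a = a' ∧ s = s' := by
      rcases has with h | h | h
      · exact h
      · exact absurd h.1 hau
      · exact absurd h.1 hau
    obtain ⟨haa', hss⟩ := haa
    have htt : t = t' := by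
      rcases hut with h | h | h
      · exact absurd (haa'.trans h.1.symm) hau
      · exact absurd (hss.trans h.2.symm) hst
      · exact h.2
    subst haa'; subst hss; subst htt; rfl
  rw [himg, Set.ncard_image_of_injOn hinj, Set.ncard_coe_finset,
    Finset.card_product, Finset.offDiag_card, Finset.offDiag_card, Finset.card_univ,
    Finset.card_univ]

lemma three_mem_decomp {γ : Type*} [DecidableEq γ] {V : Finset γ} (h3 : V.card = 3)
    {v : γ} (hv : v ∈ V) :
    ∃ b c, v ≠ b ∧ v ≠ c ∧ b ≠ c ∧ V = {v, b, c} := by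
  obtain ⟨x, y, z, hxy, hxz, hyz, rfl⟩ := Finset.card_eq_three.mp h3
  simp only [Finset.mem_insert, Finset.mem_singleton] at hv
  rcases hv with rfl | rfl | rfl
  · exact ⟨y, z, hxy, hxz, hyz, rfl⟩
  · exact ⟨x, z, Ne.symm hxy, hyz, hxz, by ext p; simp; tauto⟩
  · exact ⟨x, y, Ne.symm hxz, Ne.symm hyz, hxy, by ext p; simp; tauto⟩

lemma count23 (H2 : IsSteinerQuasigroup s2) :
    (Cls23 (α := α) s2).ncard =
      (Fintype.card α * Fintype.card α - Fintype.card α) * (3 * betaInv s2) := by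
  classical
  have hB : (BSet s2).Finite := Set.toFinite _
  set I : Finset ((α × α) × (Σ _ : Finset β, β)) :=
    (Finset.univ : Finset α).offDiag ×ˢ (hB.toFinset.sigma fun V => V) with hI
  set φ : (α × α) × (Σ _ : Finset β, β) → Finset (α × β) :=
    fun q => insert (q.1.1, q.2.2) ((q.2.1.erase q.2.2).image (fun v => (q.1.2, v))) with hφ
  have key : ∀ q ∈ I, ∃ v2 v3 : β, q.2.2 ≠ v2 ∧ q.2.2 ≠ v3 ∧ v2 ≠ v3 ∧
      q.2.1 = {q.2.2, v2, v3} ∧ q.1.1 ≠ q.1.2 ∧ q.2.1 ∈ BSet s2 ∧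
      φ q = {(q.1.1, q.2.2), (q.1.2, v2), (q.1.2, v3)} := by
    rintro ⟨⟨a, u⟩, ⟨V, v1⟩⟩ hq
    simp only [hI, Finset.mem_product, Finset.mem_offDiag, Finset.mem_sigma,
      hB.mem_toFinset] at hq
    obtain ⟨⟨-, -, hau⟩, hV, hv1⟩ := hq
    obtain ⟨v2, v3, h12, h13, h23, hdec⟩ := three_mem_decomp (BSet_card H2 hV) hv1
    refine ⟨v2, v3, h12, h13, h23, hdec, hau, hV, ?_⟩
    simp only [hφ, hdec]
    rw [Finset.erase_insert (by simp [h12, h13])]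
    simp
  have himg : Cls23 (α := α) s2 = φ '' ↑I := by
    ext E
    constructor
    · rintro ⟨a, u, hau, v1, v2, v3, d12, d13, d23, hV, rfl⟩
      have hqI : ((a, u), (⟨{v1, v2, v3}, v1⟩ : Σ _ : Finset β, β)) ∈ I := by
        simp only [hI, Finset.mem_product, Finset.mem_offDiag, Finset.mem_sigma,
          hB.mem_toFinset]
        exact ⟨⟨Finset.mem_univ _, Finset.mem_univ _, hau⟩, hV, by simp⟩
      refine ⟨_, Finset.mem_coe.mpr hqI, ?_⟩
      simp only [hφ]
      rw [Finset.erase_insert (by simp [d12, d13])]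
      simp
    · rintro ⟨q, hq, rfl⟩
      obtain ⟨v2, v3, h12, h13, h23, hdec, hau, hV, hEq⟩ := key q (Finset.mem_coe.mp hq)
      rw [hEq]
      exact ⟨q.1.1, q.1.2, hau, q.2.2, v2, v3, h12, h13, h23, hdec ▸ hV, rfl⟩
  have hinj : Set.InjOn φ ↑I := by
    rintro q hq q' hq' heq
    obtain ⟨v2, v3, h12, h13, h23, hdec, hau, hV, hEq⟩ := key q (Finset.mem_coe.mp hq)
    obtain ⟨v2', v3', h12', h13', h23', hdec', hau', hV', hEq'⟩ := key q' (Finset.mem_coe.mp hq')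
    obtain ⟨⟨a, u⟩, ⟨V, v1⟩⟩ := q
    obtain ⟨⟨a', u'⟩, ⟨V', v1'⟩⟩ := q'
    simp only at hEq hEq' hdec hdec' hau hau' h12 h13 h23 h12' h13' h23'
    rw [hEq, hEq'] at heq
    have hu2 := (Finset.ext_iff.mp heq (u, v2)).mp (by simp)
    have hu3 := (Finset.ext_iff.mp heq (u, v3)).mp (by simp)
    have hav := (Finset.ext_iff.mp heq (a, v1)).mp (by simp)
    simp only [Finset.mem_insert, Finset.mem_singleton, Prod.mk.injEq] at hu2 hu3 hav
    have huu : u = u' := by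
      by_contra hne
      have h1 : u = a' ∧ v2 = v1' := by tauto
      have h2 : u = a' ∧ v3 = v1' := by tauto
      exact h23 (h1.2.trans h2.2.symm)
    subst huu
    have haa : a = a' ∧ v1 = v1' := by
      rcases hav with h | h | h
      · exact h
      · exact absurd h.1 hau
      · exact absurd h.1 hau
    obtain ⟨haa', hvv⟩ := haa
    have hVV : V = V' := by
      have i1 : V = Finset.image Prod.snd ({(a, v1), (u, v2), (u, v3)} : Finset (α × β)) := by
        rw [hdec]; simp
      have i2 : V' = Finset.image Prod.snd ({(a', v1'), (u, v2'), (u, v3')} : Finset (α × β)) := by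
        rw [hdec']; simp
      rw [i1, i2, heq]
    subst haa'; subst hvv; subst hVV; rfl
  rw [himg, Set.ncard_image_of_injOn hinj, Set.ncard_coe_finset, hI,
    Finset.card_product, Finset.offDiag_card, Finset.card_univ, Finset.card_sigma]
  congr 1
  have hsum : ∀ V ∈ hB.toFinset, V.card = 3 := fun V hV =>
    BSet_card H2 (hB.mem_toFinset.mp hV)
  rw [Finset.sum_congr rfl hsum, Finset.sum_const, smul_eq_mul, betaInv,
    Set.ncard_eq_toFinset_card _ hB, mul_comm]

lemma Cls32_eq_swap :
    Cls32 (β := β) s1 = (fun E : Finset (β × α) => E.image Prod.swap) '' Cls23 (α := β) s1 := by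
  ext E
  constructor
  · rintro ⟨s, t, hst, u1, u2, u3, d12, d13, d23, hU, rfl⟩
    refine ⟨{(t, u1), (s, u2), (s, u3)}, ⟨t, s, Ne.symm hst, u1, u2, u3, d12, d13, d23, hU, rfl⟩, ?_⟩
    simp [Finset.image_insert]
  · rintro ⟨F, ⟨a, u, hau, v1, v2, v3, d12, d13, d23, hV, rfl⟩, rfl⟩
    refine ⟨u, a, Ne.symm hau, v1, v2, v3, d12, d13, d23, hV, ?_⟩
    simp [Finset.image_insert]

lemma count32 (H1 : IsSteinerQuasigroup s1) :
    (Cls32 (β := β) s1).ncard =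
      (Fintype.card β * Fintype.card β - Fintype.card β) * (3 * betaInv s1) := by
  rw [Cls32_eq_swap,
    Set.ncard_image_of_injOn ((Finset.image_injective Prod.swap_injective).injOn)]
  exact count23 H1

lemma matchings_card {U : Finset α} {V : Finset β} (hU : U.card = 3) (hV : V.card = 3) :
    (Finset.univ.filter (fun E : Finset (α × β) =>
      E.card = 3 ∧ E.image Prod.fst = U ∧ E.image Prod.snd = V)).card = 6 := by
  classical
  obtain ⟨u1, u2, u3, hu12, hu13, hu23, rfl⟩ := Finset.card_eq_three.mp hU
  set ψ : β × β → Finset (α × β) := fun w =>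
    insert (u1, w.1) (insert (u2, w.2)
      (((V.erase w.1).erase w.2).image (fun v => (u3, v)))) with hψdef
  have hw3 : ∀ w ∈ V.offDiag, ∃ w3 : β, w3 ∈ V ∧ w.1 ≠ w3 ∧ w.2 ≠ w3 ∧
      V = {w.1, w.2, w3} ∧ ψ w = {(u1, w.1), (u2, w.2), (u3, w3)} := by
    rintro ⟨w1, w2⟩ hw
    rw [Finset.mem_offDiag] at hw
    obtain ⟨hw1, hw2, h12⟩ := hw
    have hw2' : w2 ∈ V.erase w1 := Finset.mem_erase.mpr ⟨Ne.symm h12, hw2⟩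
    have hcard : ((V.erase w1).erase w2).card = 1 := by
      rw [Finset.card_erase_of_mem hw2', Finset.card_erase_of_mem hw1, hV]
    obtain ⟨w3, hw3eq⟩ := Finset.card_eq_one.mp hcard
    have hw3mem : w3 ∈ (V.erase w1).erase w2 := hw3eq ▸ Finset.mem_singleton_self w3
    rw [Finset.mem_erase, Finset.mem_erase] at hw3mem
    obtain ⟨h32, h31, h3V⟩ := hw3mem
    refine ⟨w3, h3V, Ne.symm h31, Ne.symm h32, ?_, ?_⟩
    · have e1 : insert w2 ((V.erase w1).erase w2) = V.erase w1 :=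
        Finset.insert_erase hw2'
      have e2 : insert w1 (V.erase w1) = V := Finset.insert_erase hw1
      rw [← e2, ← e1, hw3eq]
    · simp only [hψdef, hw3eq]
      simp
  have himg : Finset.univ.filter (fun E : Finset (α × β) =>
      E.card = 3 ∧ E.image Prod.fst = ({u1, u2, u3} : Finset α) ∧ E.image Prod.snd = V) =
      (V.offDiag).image ψ := by
    ext E
    simp only [Finset.mem_filter, Finset.mem_univ, true_and, Finset.mem_image]
    constructor
    · rintro ⟨h3, hfst, hsnd⟩
      have hinjf : Set.InjOn Prod.fst (E : Set (α × β)) := by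
        rw [← Finset.card_image_iff, hfst, h3]
        exact Finset.card_eq_three.mpr ⟨u1, u2, u3, hu12, hu13, hu23, rfl⟩
      have hinjs : Set.InjOn Prod.snd (E : Set (α × β)) := by
        rw [← Finset.card_image_iff, hsnd, h3, hV]
      have hm1 : u1 ∈ E.image Prod.fst := by rw [hfst]; simp
      have hm2 : u2 ∈ E.image Prod.fst := by rw [hfst]; simp
      have hm3 : u3 ∈ E.image Prod.fst := by rw [hfst]; simp
      simp only [Finset.mem_image] at hm1 hm2 hm3
      obtain ⟨p1, hp1, hq1⟩ := hm1
      obtain ⟨p2, hp2, hq2⟩ := hm2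
      obtain ⟨p3, hp3, hq3⟩ := hm3
      have hp1e : p1 = (u1, p1.2) := by rw [← hq1]
      have hp2e : p2 = (u2, p2.2) := by rw [← hq2]
      have hp3e : p3 = (u3, p3.2) := by rw [← hq3]
      have hpne12 : p1 ≠ p2 := fun h => hu12 (by rw [← hq1, ← hq2, h])
      have hpne13 : p1 ≠ p3 := fun h => hu13 (by rw [← hq1, ← hq3, h])
      have hpne23 : p2 ≠ p3 := fun h => hu23 (by rw [← hq2, ← hq3, h])
      have hEeq : E = {p1, p2, p3} := by
        apply (Finset.eq_of_subset_of_card_le ?_ ?_).symm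
        · intro p hp
          simp only [Finset.mem_insert, Finset.mem_singleton] at hp
          rcases hp with rfl | rfl | rfl <;> assumption
        · rw [h3, Finset.card_eq_three.mpr ⟨p1, p2, p3, hpne12, hpne13, hpne23, rfl⟩]
      have hq12 : p1.2 ≠ p2.2 := fun h => hpne12 (hinjs hp1 hp2 h)
      have hoff : (p1.2, p2.2) ∈ V.offDiag := by
        rw [Finset.mem_offDiag]
        refine ⟨?_, ?_, hq12⟩
        · rw [← hsnd]; exact Finset.mem_image_of_mem _ hp1
        · rw [← hsnd]; exact Finset.mem_image_of_mem _ hp2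
      obtain ⟨w3, h3V, h13', h23', hVeq, hψeq⟩ := hw3 _ hoff
      refine ⟨(p1.2, p2.2), hoff, ?_⟩
      rw [hψeq]
      have hw3q3 : w3 = p3.2 := by
        have : p3.2 ∈ V := by rw [← hsnd]; exact Finset.mem_image_of_mem _ hp3
        rw [hVeq] at this
        simp only [Finset.mem_insert, Finset.mem_singleton] at this
        have hq13 : p1.2 ≠ p3.2 := fun h => hpne13 (hinjs hp1 hp3 h)
        have hq23 : p2.2 ≠ p3.2 := fun h => hpne23 (hinjs hp2 hp3 h)
        rcases this with h | h | h
        · exact absurd h.symm hq13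
        · exact absurd h.symm hq23
        · exact h.symm
      rw [hw3q3, hEeq]
      rw [hp1e, hp2e, hp3e]
    · rintro ⟨w, hw, rfl⟩
      obtain ⟨w3, h3V, h13', h23', hVeq, hψeq⟩ := hw3 _ hw
      rw [Finset.mem_offDiag] at hw
      rw [hψeq]
      refine ⟨?_, ?_, ?_⟩
      · refine Finset.card_eq_three.mpr ⟨_, _, _, ?_, ?_, ?_, rfl⟩ <;> simp [hu12, hu13, hu23]
      · ext q; simp; try tauto
      · rw [hVeq]; ext q; simp; try tauto
  have hinj : Set.InjOn ψ ↑V.offDiag := by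
    intro w hw w' hw' heq
    obtain ⟨w3, h3V, h13', h23', hVeq, hψeq⟩ := hw3 _ (Finset.mem_coe.mp hw)
    obtain ⟨w3', h3V', h13'', h23'', hVeq', hψeq'⟩ := hw3 _ (Finset.mem_coe.mp hw')
    rw [hψeq, hψeq'] at heq
    have e1 := (Finset.ext_iff.mp heq (u1, w.1)).mp (by simp)
    have e2 := (Finset.ext_iff.mp heq (u2, w.2)).mp (by simp)
    simp only [Finset.mem_insert, Finset.mem_singleton, Prod.mk.injEq] at e1 e2
    have h1 : w.1 = w'.1 := by
      rcases e1 with h | h | h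
      · exact h.2
      · exact absurd h.1 hu12
      · exact absurd h.1 hu13
    have h2 : w.2 = w'.2 := by
      rcases e2 with h | h | h
      · exact absurd h.1 (Ne.symm hu12)
      · exact h.2
      · exact absurd h.1 hu23
    exact Prod.ext h1 h2
  rw [himg, Finset.card_image_of_injOn hinj, Finset.offDiag_card, hV]

lemma count33 (H1 : IsSteinerQuasigroup s1) (H2 : IsSteinerQuasigroup s2) :
    (Cls33 s1 s2).ncard + 6 * (alphaInv s1 * alphaInv s2) =
      6 * (alphaInv s1 * betaInv s2) + 6 * (betaInv s1 * alphaInv s2) := by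
  classical
  have hA1 : (ASet s1).Finite := Set.toFinite _
  have hB1 : (BSet s1).Finite := Set.toFinite _
  have hA2 : (ASet s2).Finite := Set.toFinite _
  have hB2 : (BSet s2).Finite := Set.toFinite _
  set G : Finset (Finset α × Finset β) :=
    (hA1.toFinset ×ˢ hB2.toFinset) ∪ (hB1.toFinset ×ˢ hA2.toFinset) with hG
  set Mf : Finset α × Finset β → Finset (Finset (α × β)) := fun p =>
    Finset.univ.filter (fun E => E.card = 3 ∧ E.image Prod.fst = p.1 ∧
      E.image Prod.snd = p.2) with hMf
  have hGmem : ∀ p ∈ G, (p.1 ∈ ASet s1 ∧ p.2 ∈ BSet s2) ∨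
      (p.1 ∈ BSet s1 ∧ p.2 ∈ ASet s2) := by
    intro p hp
    simp only [hG, Finset.mem_union, Finset.mem_product, hA1.mem_toFinset,
      hB1.mem_toFinset, hA2.mem_toFinset, hB2.mem_toFinset] at hp
    tauto
  have himg : Cls33 s1 s2 = ↑(G.biUnion Mf) := by
    ext E
    simp only [Finset.mem_coe, Finset.mem_biUnion]
    constructor
    · rintro ⟨u1, u2, u3, v1, v2, v3, d12, d13, d23, e12, e13, e23, hD, rfl⟩
      refine ⟨({u1, u2, u3}, {v1, v2, v3}), ?_, ?_⟩
      · simp only [hG, Finset.mem_union, Finset.mem_product, hA1.mem_toFinset,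
          hB1.mem_toFinset, hA2.mem_toFinset, hB2.mem_toFinset]
        tauto
      · simp only [hMf, Finset.mem_filter, Finset.mem_univ, true_and]
        refine ⟨?_, by simp, by simp⟩
        refine Finset.card_eq_three.mpr ⟨_, _, _, ?_, ?_, ?_, rfl⟩ <;>
          simp [d12, d13, d23]
    · rintro ⟨p, hp, hE⟩
      simp only [hMf, Finset.mem_filter, Finset.mem_univ, true_and] at hE
      obtain ⟨h3, hfst, hsnd⟩ := hE
      have hp1card : p.1.card = 3 := by
        rcases hGmem p hp with ⟨h, -⟩ | ⟨h, -⟩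
        · exact BSet_card H1 (ASet_subset_BSet h)
        · exact BSet_card H1 h
      have hp2card : p.2.card = 3 := by
        rcases hGmem p hp with ⟨-, h⟩ | ⟨-, h⟩
        · exact BSet_card H2 h
        · exact BSet_card H2 (ASet_subset_BSet h)
      obtain ⟨q1, q2, q3, hq12, hq13, hq23, rfl⟩ := Finset.card_eq_three.mp h3
      have hinjf : Set.InjOn Prod.fst (({q1, q2, q3} : Finset (α × β)) : Set (α × β)) := by
        rw [← Finset.card_image_iff, hfst, hp1card, h3]
      have hinjs : Set.InjOn Prod.snd (({q1, q2, q3} : Finset (α × β)) : Set (α × β)) := by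
        rw [← Finset.card_image_iff, hsnd, hp2card, h3]
      have hu12 : q1.1 ≠ q2.1 := fun h => hq12 (hinjf (by simp) (by simp) h)
      have hu13 : q1.1 ≠ q3.1 := fun h => hq13 (hinjf (by simp) (by simp) h)
      have hu23 : q2.1 ≠ q3.1 := fun h => hq23 (hinjf (by simp) (by simp) h)
      have hv12 : q1.2 ≠ q2.2 := fun h => hq12 (hinjs (by simp) (by simp) h)
      have hv13 : q1.2 ≠ q3.2 := fun h => hq13 (hinjs (by simp) (by simp) h)
      have hv23 : q2.2 ≠ q3.2 := fun h => hq23 (hinjs (by simp) (by simp) h)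
      have hfst' : p.1 = {q1.1, q2.1, q3.1} := by rw [← hfst]; simp
      have hsnd' : p.2 = {q1.2, q2.2, q3.2} := by rw [← hsnd]; simp
      refine ⟨q1.1, q2.1, q3.1, q1.2, q2.2, q3.2, hu12, hu13, hu23, hv12, hv13, hv23, ?_, ?_⟩
      · have := hGmem p hp
        rw [hfst', hsnd'] at this
        exact this
      · simp
  have hfib : ∀ p ∈ G, (Mf p).card = 6 := by
    intro p hp
    have h1 : p.1.card = 3 := by
      rcases hGmem p hp with ⟨h, -⟩ | ⟨h, -⟩
      · exact BSet_card H1 (ASet_subset_BSet h)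
      · exact BSet_card H1 h
    have h2 : p.2.card = 3 := by
      rcases hGmem p hp with ⟨-, h⟩ | ⟨-, h⟩
      · exact BSet_card H2 h
      · exact BSet_card H2 (ASet_subset_BSet h)
    simp only [hMf]
    exact matchings_card h1 h2
  have hdisj : ∀ p ∈ G, ∀ p' ∈ G, p ≠ p' → Disjoint (Mf p) (Mf p') := by
    intro p _ p' _ hne
    rw [Finset.disjoint_left]
    intro E hE hE'
    simp only [hMf, Finset.mem_filter, Finset.mem_univ, true_and] at hE hE'
    apply hne
    apply Prod.ext
    · rw [← hE.2.1, hE'.2.1]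
    · rw [← hE.2.2, hE'.2.2]
  have hcard : (Cls33 s1 s2).ncard = 6 * G.card := by
    rw [himg, Set.ncard_coe_finset, Finset.card_biUnion hdisj,
      Finset.sum_congr rfl hfib, Finset.sum_const, smul_eq_mul, mul_comm]
  have hint : (hA1.toFinset ×ˢ hB2.toFinset) ∩ (hB1.toFinset ×ˢ hA2.toFinset) =
      hA1.toFinset ×ˢ hA2.toFinset := by
    rw [Finset.product_inter_product]
    congr 1
    · apply Finset.inter_eq_left.mpr
      intro x hx
      rw [hB1.mem_toFinset]
      exact ASet_subset_BSet (hA1.mem_toFinset.mp hx)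
    · apply Finset.inter_eq_right.mpr
      intro x hx
      rw [hB2.mem_toFinset]
      exact ASet_subset_BSet (hA2.mem_toFinset.mp hx)
  have hGcard : G.card + alphaInv s1 * alphaInv s2 =
      alphaInv s1 * betaInv s2 + betaInv s1 * alphaInv s2 := by
    have h := Finset.card_union_add_card_inter (hA1.toFinset ×ˢ hB2.toFinset)
      (hB1.toFinset ×ˢ hA2.toFinset)
    rw [hint, Finset.card_product, Finset.card_product, Finset.card_product] at h
    rw [hG]
    rw [alphaInv, alphaInv, betaInv, betaInv, Set.ncard_eq_toFinset_card _ hA1,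
      Set.ncard_eq_toFinset_card _ hA2, Set.ncard_eq_toFinset_card _ hB1,
      Set.ncard_eq_toFinset_card _ hB2]
    exact h
  rw [hcard]
  calc 6 * G.card + 6 * (alphaInv s1 * alphaInv s2)
      = 6 * (G.card + alphaInv s1 * alphaInv s2) := by ring
    _ = 6 * (alphaInv s1 * betaInv s2 + betaInv s1 * alphaInv s2) := by rw [hGcard]
    _ = 6 * (alphaInv s1 * betaInv s2) + 6 * (betaInv s1 * alphaInv s2) := by ring

end Counts





section Shapes
variable {α β : Type*} [DecidableEq α] [DecidableEq β]
variable {s1 : α → α → α} {s2 : β → β → β}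

def shp (E : Finset (α × β)) : ℕ × ℕ := ((E.image Prod.fst).card, (E.image Prod.snd).card)

lemma sh13 (H2 : IsSteinerQuasigroup s2) {E : Finset (α × β)}
    (hE : E ∈ Cls13 (α := α) s2) : shp E = (1, 3) := by
  obtain ⟨a, w, hw, rfl⟩ := hE
  have h3 : w.card = 3 := ASet_mem_card H2 hw
  obtain ⟨y0, hy0⟩ : w.Nonempty := Finset.card_pos.mp (by omega)
  have e1 : (w.image (fun y => (a, y))).image Prod.fst = {a} := by
    ext x
    simp only [Finset.image_image, Finset.mem_image, Finset.mem_singleton]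
    constructor
    · rintro ⟨b, hb, rfl⟩; rfl
    · rintro rfl; exact ⟨y0, hy0, rfl⟩
  have e2 : (w.image (fun y => (a, y))).image Prod.snd = w := by
    ext x
    simp only [Finset.image_image, Finset.mem_image]
    constructor
    · rintro ⟨b, hb, rfl⟩; exact hb
    · intro hx; exact ⟨x, hx, rfl⟩
  rw [shp, e1, e2, h3, Finset.card_singleton]

lemma sh31 (H1 : IsSteinerQuasigroup s1) {E : Finset (α × β)}
    (hE : E ∈ Cls31 (β := β) s1) : shp E = (3, 1) := by
  obtain ⟨y, w, hw, rfl⟩ := hE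
  have h3 : w.card = 3 := ASet_mem_card H1 hw
  obtain ⟨y0, hy0⟩ : w.Nonempty := Finset.card_pos.mp (by omega)
  have e1 : (w.image (fun u => (u, y))).image Prod.fst = w := by
    ext x
    simp only [Finset.image_image, Finset.mem_image]
    constructor
    · rintro ⟨b, hb, rfl⟩; exact hb
    · intro hx; exact ⟨x, hx, rfl⟩
  have e2 : (w.image (fun u => (u, y))).image Prod.snd = {y} := by
    ext x
    simp only [Finset.image_image, Finset.mem_image, Finset.mem_singleton]
    constructor
    · rintro ⟨b, hb, rfl⟩; rfl
    · rintro rfl; exact ⟨y0, hy0, rfl⟩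
  rw [shp, e1, e2, h3, Finset.card_singleton]

lemma sh22 {E : Finset (α × β)} (hE : E ∈ Cls22 (α := α) (β := β)) : shp E = (2, 2) := by
  obtain ⟨a, u, s, t, hau, hst, rfl⟩ := hE
  have e1 : (({(a,s),(u,s),(u,t)} : Finset (α × β)).image Prod.fst) = {a, u} := by
    ext x; simp; try tauto
  have e2 : (({(a,s),(u,s),(u,t)} : Finset (α × β)).image Prod.snd) = {s, t} := by
    ext x; simp; try tauto
  rw [shp, e1, e2, Finset.card_pair hau, Finset.card_pair hst]

lemma sh23 {E : Finset (α × β)} (hE : E ∈ Cls23 (α := α) s2) : shp E = (2, 3) := by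
  obtain ⟨a, u, hau, v1, v2, v3, d12, d13, d23, hV, rfl⟩ := hE
  have e1 : (({(a,v1),(u,v2),(u,v3)} : Finset (α × β)).image Prod.fst) = {a, u} := by
    ext x; simp; try tauto
  have e2 : (({(a,v1),(u,v2),(u,v3)} : Finset (α × β)).image Prod.snd) = {v1, v2, v3} := by
    ext x; simp
  rw [shp, e1, e2, Finset.card_pair hau,
    Finset.card_eq_three.mpr ⟨v1, v2, v3, d12, d13, d23, rfl⟩]

lemma sh32 {E : Finset (α × β)} (hE : E ∈ Cls32 (β := β) s1) : shp E = (3, 2) := by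
  obtain ⟨s, t, hst, u1, u2, u3, d12, d13, d23, hU, rfl⟩ := hE
  have e1 : (({(u1,t),(u2,s),(u3,s)} : Finset (α × β)).image Prod.fst) = {u1, u2, u3} := by
    ext x; simp
  have e2 : (({(u1,t),(u2,s),(u3,s)} : Finset (α × β)).image Prod.snd) = {t, s} := by
    ext x; simp; try tauto
  rw [shp, e1, e2, Finset.card_pair (Ne.symm hst),
    Finset.card_eq_three.mpr ⟨u1, u2, u3, d12, d13, d23, rfl⟩]

lemma sh33 {E : Finset (α × β)} (hE : E ∈ Cls33 s1 s2) : shp E = (3, 3) := by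
  obtain ⟨u1, u2, u3, v1, v2, v3, d12, d13, d23, e12, e13, e23, hD, rfl⟩ := hE
  have e1 : (({(u1,v1),(u2,v2),(u3,v3)} : Finset (α × β)).image Prod.fst) = {u1, u2, u3} := by
    ext x; simp
  have e2 : (({(u1,v1),(u2,v2),(u3,v3)} : Finset (α × β)).image Prod.snd) = {v1, v2, v3} := by
    ext x; simp
  rw [shp, e1, e2, Finset.card_eq_three.mpr ⟨v1, v2, v3, e12, e13, e23, rfl⟩,
    Finset.card_eq_three.mpr ⟨u1, u2, u3, d12, d13, d23, rfl⟩]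

lemma disj_of_shape {P Q : Set (Finset (α × β))} {p q : ℕ × ℕ}
    (hP : ∀ E ∈ P, shp E = p) (hQ : ∀ E ∈ Q, shp E = q) (hpq : p ≠ q) :
    Disjoint P Q :=
  Set.disjoint_left.mpr fun {E} hE hE' => hpq (by rw [← hP _ hE, hQ _ hE'])

end Shapes

section Total
variable {α β : Type*} [DecidableEq α] [DecidableEq β] [Fintype α] [Fintype β]
variable {s1 : α → α → α} {s2 : β → β → β}

lemma two_mul_choose_two (k : ℕ) : 2 * k.choose 2 = k * k - k := by
  cases k with
  | zero => rfl
  | succ n =>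
    have h1 : (n + 1).choose 2 = (n + 1) * n / 2 := by
      rw [Nat.choose_two_right]
      simp
    have h2 : 2 ∣ (n + 1) * n := by
      have := Nat.even_mul_succ_self n
      rw [mul_comm] at this
      exact this.two_dvd
    rw [h1, Nat.mul_div_cancel' h2]
    have h3 : (n + 1) * (n + 1) = (n + 1) * n + (n + 1) := by ring
    omega

lemma total_count (H1 : IsSteinerQuasigroup s1) (H2 : IsSteinerQuasigroup s2) :
    (ASet (pStar s1 s2)).ncard + 6 * (alphaInv s1 * alphaInv s2) =
      Fintype.card α * alphaInv s2 + Fintype.card β * alphaInv s1 +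
      (Fintype.card α * Fintype.card α - Fintype.card α) *
        (Fintype.card β * Fintype.card β - Fintype.card β) +
      (Fintype.card α * Fintype.card α - Fintype.card α) * (3 * betaInv s2) +
      (Fintype.card β * Fintype.card β - Fintype.card β) * (3 * betaInv s1) +
      (6 * (alphaInv s1 * betaInv s2) + 6 * (betaInv s1 * alphaInv s2)) := by
  have hs13 : ∀ E ∈ Cls13 (α := α) s2, shp E = (1, 3) := fun E h => sh13 H2 h
  have hs31 : ∀ E ∈ Cls31 (β := β) s1, shp E = (3, 1) := fun E h => sh31 H1 h
  have hs22 : ∀ E ∈ Cls22 (α := α) (β := β), shp E = (2, 2) := fun E h => sh22 h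
  have hs23 : ∀ E ∈ Cls23 (α := α) s2, shp E = (2, 3) := fun E h => sh23 h
  have hs32 : ∀ E ∈ Cls32 (β := β) s1, shp E = (3, 2) := fun E h => sh32 h
  have hs33 : ∀ E ∈ Cls33 s1 s2, shp E = (3, 3) := fun E h => sh33 h
  have D1 : Disjoint (Cls13 (α := α) s2) (Cls31 (β := β) s1) :=
    disj_of_shape hs13 hs31 (by decide)
  have D2 : Disjoint (Cls13 (α := α) s2 ∪ Cls31 (β := β) s1) (Cls22 (α := α) (β := β)) :=
    Set.disjoint_union_left.mpr
      ⟨disj_of_shape hs13 hs22 (by decide), disj_of_shape hs31 hs22 (by decide)⟩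
  have D3 : Disjoint (Cls13 (α := α) s2 ∪ Cls31 (β := β) s1 ∪ Cls22 (α := α) (β := β))
      (Cls23 (α := α) s2) :=
    Set.disjoint_union_left.mpr
      ⟨Set.disjoint_union_left.mpr
        ⟨disj_of_shape hs13 hs23 (by decide), disj_of_shape hs31 hs23 (by decide)⟩,
       disj_of_shape hs22 hs23 (by decide)⟩
  have D4 : Disjoint (Cls13 (α := α) s2 ∪ Cls31 (β := β) s1 ∪ Cls22 (α := α) (β := β) ∪
      Cls23 (α := α) s2) (Cls32 (β := β) s1) :=
    Set.disjoint_union_left.mpr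
      ⟨Set.disjoint_union_left.mpr
        ⟨Set.disjoint_union_left.mpr
          ⟨disj_of_shape hs13 hs32 (by decide), disj_of_shape hs31 hs32 (by decide)⟩,
         disj_of_shape hs22 hs32 (by decide)⟩,
       disj_of_shape hs23 hs32 (by decide)⟩
  have D5 : Disjoint (Cls13 (α := α) s2 ∪ Cls31 (β := β) s1 ∪ Cls22 (α := α) (β := β) ∪
      Cls23 (α := α) s2 ∪ Cls32 (β := β) s1) (Cls33 s1 s2) :=
    Set.disjoint_union_left.mpr
      ⟨Set.disjoint_union_left.mpr
        ⟨Set.disjoint_union_left.mpr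
          ⟨Set.disjoint_union_left.mpr
            ⟨disj_of_shape hs13 hs33 (by decide), disj_of_shape hs31 hs33 (by decide)⟩,
           disj_of_shape hs22 hs33 (by decide)⟩,
         disj_of_shape hs23 hs33 (by decide)⟩,
       disj_of_shape hs32 hs33 (by decide)⟩
  rw [ASet_pStar_eq H1 H2, ClsUnion, Set.ncard_union_eq D5, Set.ncard_union_eq D4,
    Set.ncard_union_eq D3, Set.ncard_union_eq D2, Set.ncard_union_eq D1,
    count13 H2, count31 H1, count22, count23 H2, count32 H1]
  have h33 := count33 H1 H2
  linarith [h33]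

end Total


/-- The formula for `α(S × T)` (stated in ℤ because of the subtraction). -/
theorem stmt11 {X Y : Type*} [Fintype X] [Fintype Y] [DecidableEq X] [DecidableEq Y]
    (starS : X → X → X) (starT : Y → Y → Y)
    (hS : IsSteinerQuasigroup starS) (hT : IsSteinerQuasigroup starT)
    (m n : ℕ) (hm : Fintype.card X = m) (hn : Fintype.card Y = n) :
    (alphaInv (fun p q : X × Y => (starS p.1 q.1, starT p.2 q.2)) : ℤ) =
      6 * alphaInv starS * betaInv starT + 6 * betaInv starS * alphaInv starT
        - 6 * alphaInv starS * alphaInv starT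
        + 6 * n.choose 2 * betaInv starS + 6 * m.choose 2 * betaInv starT
        + n * alphaInv starS + m * alphaInv starT
        + 4 * m.choose 2 * n.choose 2 := by
  subst hm; subst hn
  have key := total_count hS hT
  rw [← two_mul_choose_two (Fintype.card X), ← two_mul_choose_two (Fintype.card Y)] at key
  have keyZ := congrArg (Nat.cast : ℕ → ℤ) key
  push_cast at keyZ
  show (alphaInv (pStar starS starT) : ℤ) = _
  rw [alphaInv] at keyZ ⊢
  push_cast
  ring_nf at keyZ ⊢
  linarith [keyZ]
end

section
/- Let S and T be Steiner triple systems of orders m and n respectively. Then β(S×T) = 6·β(S)·β(T) + (6·C(n,2) + n)·β(S) + (6·C(m,2) + m)·β(T) + 4·C(m,2)·C(n,2). -/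
section TripleHelpers
variable {α : Type*} [DecidableEq α]

lemma mem3 {p A B C : α} : p ∈ ({A, B, C} : Finset α) ↔ p = A ∨ p = B ∨ p = C := by simp

lemma card3 {a b c : α} (h1 : a ≠ b) (h2 : a ≠ c) (h3 : b ≠ c) :
    ({a, b, c} : Finset α).card = 3 := by
  rw [Finset.card_insert_of_notMem (by simp [h1, h2]),
    Finset.card_insert_of_notMem (by simp [h3]), Finset.card_singleton]

lemma tswap12 (a b c : α) : ({a, b, c} : Finset α) = {b, a, c} := by ext x; simp; tauto

lemma tswap23 (a b c : α) : ({a, b, c} : Finset α) = {a, c, b} := by ext x; simp; tauto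

lemma trot (a b c : α) : ({a, b, c} : Finset α) = {b, c, a} := by ext x; simp; tauto

lemma triple_eq_cases {v1 v2 v3 r1 r2 r3 : α} (d12 : v1 ≠ v2) (d13 : v1 ≠ v3) (d23 : v2 ≠ v3)
    (h : ({v1, v2, v3} : Finset α) = ({r1, r2, r3} : Finset α)) :
    (v1 = r1 ∧ v2 = r2 ∧ v3 = r3) ∨ (v1 = r1 ∧ v2 = r3 ∧ v3 = r2) ∨
    (v1 = r2 ∧ v2 = r1 ∧ v3 = r3) ∨ (v1 = r2 ∧ v2 = r3 ∧ v3 = r1) ∨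
    (v1 = r3 ∧ v2 = r1 ∧ v3 = r2) ∨ (v1 = r3 ∧ v2 = r2 ∧ v3 = r1) := by
  have m1 : v1 = r1 ∨ v1 = r2 ∨ v1 = r3 := mem3.mp (h ▸ (by simp : v1 ∈ ({v1,v2,v3} : Finset α)))
  have m2 : v2 = r1 ∨ v2 = r2 ∨ v2 = r3 := mem3.mp (h ▸ (by simp : v2 ∈ ({v1,v2,v3} : Finset α)))
  have m3 : v3 = r1 ∨ v3 = r2 ∨ v3 = r3 := mem3.mp (h ▸ (by simp : v3 ∈ ({v1,v2,v3} : Finset α)))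
  have n1 : r1 = v1 ∨ r1 = v2 ∨ r1 = v3 := mem3.mp (h ▸ (by simp : r1 ∈ ({r1,r2,r3} : Finset α)))
  have n2 : r2 = v1 ∨ r2 = v2 ∨ r2 = v3 := mem3.mp (h ▸ (by simp : r2 ∈ ({r1,r2,r3} : Finset α)))
  rcases m1 with h1 | h1 | h1 <;> rcases m2 with h2 | h2 | h2 <;>
    rcases m3 with h3 | h3 | h3 <;> subst_vars <;> simp_all

lemma exists_sorted3 [LinearOrder α] {a b c : α} (d12 : a ≠ b) (d13 : a ≠ c) (d23 : b ≠ c) :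
    ∃ u1 u2 u3 : α, u1 < u2 ∧ u2 < u3 ∧ ({u1, u2, u3} : Finset α) = {a, b, c} := by
  rcases lt_trichotomy a b with hab | hab | hab
  · rcases lt_trichotomy b c with hbc | hbc | hbc
    · exact ⟨a, b, c, hab, hbc, rfl⟩
    · exact absurd hbc d23
    · rcases lt_trichotomy a c with hac | hac | hac
      · exact ⟨a, c, b, hac, hbc, tswap23 a b c ▸ rfl⟩
      · exact absurd hac d13
      · exact ⟨c, a, b, hac, hab, by rw [trot]⟩
  · exact absurd hab d12
  · rcases lt_trichotomy a c with hac | hac | hac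
    · exact ⟨b, a, c, hab, hac, tswap12 a b c ▸ rfl⟩
    · exact absurd hac d13
    · rcases lt_trichotomy b c with hbc | hbc | hbc
      · exact ⟨b, c, a, hbc, hac, by rw [trot, trot]⟩
      · exact absurd hbc d23
      · exact ⟨c, b, a, hbc, hab, by rw [tswap12, trot, trot]⟩

lemma sorted3_unique [LinearOrder α] {u1 u2 u3 w1 w2 w3 : α}
    (hu1 : u1 < u2) (hu2 : u2 < u3) (hw1 : w1 < w2) (hw2 : w2 < w3)
    (h : ({u1, u2, u3} : Finset α) = {w1, w2, w3}) : u1 = w1 ∧ u2 = w2 ∧ u3 = w3 := by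
  rcases triple_eq_cases hu1.ne (hu1.trans hu2).ne hu2.ne h with
    H | H | H | H | H | H <;> obtain ⟨e1, e2, e3⟩ := H <;> subst_vars <;>
    first
      | exact ⟨rfl, rfl, rfl⟩
      | (exfalso; exact lt_irrefl _ (by
          first
            | exact hu2.trans hw2
            | exact hu1.trans hw1
            | exact hu2.trans (hw1.trans hw2)
            | exact (hu1.trans hu2).trans hw2
            | exact hu1.trans hw2
            | exact hu1.trans hu2))

end TripleHelpers
section SQ
variable {α : Type*} [DecidableEq α] {star : α → α → α} (h : IsSteinerQuasigroup star)
include h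

lemma sq_cancel_s12 {a b c : α} (e : star a b = star a c) : b = c := by
  have hb := h.2.2 a b
  rw [e, h.2.2] at hb; exact hb.symm

lemma star_ne_left {a b : α} (hab : a ≠ b) : star a b ≠ a := by
  intro e
  have t := h.2.2 a b
  rw [e, h.1] at t
  exact hab t

lemma star_ne_right {a b : α} (hab : a ≠ b) : star a b ≠ b := by
  rw [h.2.1]; exact star_ne_left h hab.symm

lemma tri12 {a b c : α} (hac : a ≠ c) : star a b ≠ star b c := by
  intro e; rw [h.2.1 a b] at e; exact hac (sq_cancel_s12 h e)

lemma tri13 {a b c : α} (hbc : b ≠ c) : star a b ≠ star c a := by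
  intro e; rw [h.2.1 c a] at e; exact hbc (sq_cancel_s12 h e)

lemma tri23 {a b c : α} (hab : a ≠ b) : star b c ≠ star c a := by
  intro e; rw [h.2.1 b c] at e; exact hab (sq_cancel_s12 h e).symm

lemma mem_BSet_of {a b c : α} (d12 : a ≠ b) (d13 : a ≠ c) (d23 : b ≠ c) :
    ({star a b, star b c, star c a} : Finset α) ∈ BSet star :=
  ⟨a, b, c, d12, d13, d23, rfl⟩

lemma BSet_card3 {F : Finset α} (hF : F ∈ BSet star) : F.card = 3 := by
  obtain ⟨a, b, c, d12, d13, d23, rfl⟩ := hF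
  exact card3 (tri12 h d13) (tri13 h d23) (tri23 h d12)

lemma ordered_triangle_real {w1 w2 w3 : α} (d12 : w1 ≠ w2) (d13 : w1 ≠ w3) (d23 : w2 ≠ w3)
    (hm : ({w1, w2, w3} : Finset α) ∈ BSet star) :
    ∃ x y z : α, x ≠ y ∧ x ≠ z ∧ y ≠ z ∧ star x y = w1 ∧ star y z = w2 ∧ star z x = w3 := by
  obtain ⟨x, y, z, e12, e13, e23, hset⟩ := hm
  rcases triple_eq_cases d12 d13 d23 hset with H | H | H | H | H | H <;>
    obtain ⟨f1, f2, f3⟩ := H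
  · exact ⟨x, y, z, e12, e13, e23, f1.symm, f2.symm, f3.symm⟩
  · -- w1 = x⋆y, w2 = z⋆x, w3 = y⋆z : use (y,x,z): y⋆x = w1, x⋆z = w2, z⋆y = w3
    exact ⟨y, x, z, e12.symm, e23, e13, by rw [h.2.1]; exact f1.symm,
      by rw [h.2.1]; exact f2.symm, by rw [h.2.1]; exact f3.symm⟩
  · -- w1 = y⋆z, w2 = x⋆y, w3 = z⋆x : use (z,y,x)
    exact ⟨z, y, x, e23.symm, e13.symm, e12.symm, by rw [h.2.1]; exact f1.symm,
      by rw [h.2.1]; exact f2.symm, by rw [h.2.1]; exact f3.symm⟩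
  · -- w1 = y⋆z, w2 = z⋆x, w3 = x⋆y : use (z,y,x): z⋆y = w1, y⋆x = w2? no...
    -- need x'⋆y' = w1 = y⋆z, y'⋆z' = w2 = z⋆x, z'⋆x' = w3 = x⋆y: (y,z,x)? y⋆z=w1 ✓ z⋆x=w2 ✓ x⋆y=w3 ✓
    exact ⟨y, z, x, e23, e12.symm, e13.symm, f1.symm, f2.symm, f3.symm⟩
  · -- w1 = z⋆x, w2 = x⋆y, w3 = y⋆z : use (z,x,y)
    exact ⟨z, x, y, e13.symm, e23.symm, e12, f1.symm, f2.symm, f3.symm⟩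
  · -- w1 = z⋆x, w2 = y⋆z, w3 = x⋆y : use (x,z,y): x⋆z = w1? x⋆z = z⋆x ✓, z⋆y = w2 ✓, y⋆x = w3 ✓
    exact ⟨x, z, y, e13, e12, e23.symm, by rw [h.2.1]; exact f1.symm,
      by rw [h.2.1]; exact f2.symm, by rw [h.2.1]; exact f3.symm⟩

end SQ

section Product
variable {X Y : Type*} [Fintype X] [Fintype Y] [DecidableEq X] [DecidableEq Y]

noncomputable def BF {α : Type*} [Fintype α] [DecidableEq α] (star : α → α → α) :
    Finset (Finset α) := (Set.toFinite (BSet star)).toFinset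

lemma mem_BF {α : Type*} [Fintype α] [DecidableEq α] {star : α → α → α} {F : Finset α} :
    F ∈ BF star ↔ F ∈ BSet star := Set.Finite.mem_toFinset _

lemma card_BF {α : Type*} [Fintype α] [DecidableEq α] (star : α → α → α) :
    (BF star).card = betaInv star := (Set.ncard_eq_toFinset_card _ _).symm

variable (starS : X → X → X) (starT : Y → Y → Y)

def pstar : X × Y → X × Y → X × Y := fun p q => (starS p.1 q.1, starT p.2 q.2)

open Classical in
noncomputable def SOS [LinearOrder X] : Finset (X × X × X) :=
  Finset.univ.filter
    (fun u => u.1 < u.2.1 ∧ u.2.1 < u.2.2 ∧ ({u.1, u.2.1, u.2.2} : Finset X) ∈ BSet starS)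

open Classical in
noncomputable def SOT [LinearOrder Y] : Finset (Y × Y × Y) :=
  Finset.univ.filter
    (fun v => v.1 < v.2.1 ∧ v.2.1 < v.2.2 ∧ ({v.1, v.2.1, v.2.2} : Finset Y) ∈ BSet starT)

open Classical in
noncomputable def OT : Finset (Y × Y × Y) :=
  Finset.univ.filter
    (fun v => v.1 ≠ v.2.1 ∧ v.1 ≠ v.2.2 ∧ v.2.1 ≠ v.2.2 ∧
      ({v.1, v.2.1, v.2.2} : Finset Y) ∈ BSet starT)

noncomputable def im1 : Finset (Finset (X × Y)) :=
  (Finset.univ ×ˢ BF starT).image (fun p : X × Finset Y => p.2.image (fun v => (p.1, v)))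

noncomputable def im2 : Finset (Finset (X × Y)) :=
  (BF starS ×ˢ Finset.univ).image (fun p : Finset X × Y => p.1.image (fun u => (u, p.2)))

noncomputable def im3 [LinearOrder X] : Finset (Finset (X × Y)) :=
  (SOS starS ×ˢ OT starT).image
    (fun p => {(p.1.1, p.2.1), (p.1.2.1, p.2.2.1), (p.1.2.2, p.2.2.2)})

noncomputable def im4a [LinearOrder X] : Finset (Finset (X × Y)) :=
  (SOS starS ×ˢ Finset.univ.offDiag).image
    (fun p => {(p.1.1, p.2.1), (p.1.2.1, p.2.2), (p.1.2.2, p.2.2)})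

noncomputable def im4b [LinearOrder X] : Finset (Finset (X × Y)) :=
  (SOS starS ×ˢ Finset.univ.offDiag).image
    (fun p => {(p.1.1, p.2.2), (p.1.2.1, p.2.1), (p.1.2.2, p.2.2)})

noncomputable def im4c [LinearOrder X] : Finset (Finset (X × Y)) :=
  (SOS starS ×ˢ Finset.univ.offDiag).image
    (fun p => {(p.1.1, p.2.2), (p.1.2.1, p.2.2), (p.1.2.2, p.2.1)})

noncomputable def im5a [LinearOrder Y] : Finset (Finset (X × Y)) :=
  (Finset.univ.offDiag ×ˢ SOT starT).image
    (fun p : (X × X) × (Y × Y × Y) => {(p.1.1, p.2.1), (p.1.2, p.2.2.1), (p.1.2, p.2.2.2)})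

noncomputable def im5b [LinearOrder Y] : Finset (Finset (X × Y)) :=
  (Finset.univ.offDiag ×ˢ SOT starT).image
    (fun p : (X × X) × (Y × Y × Y) => {(p.1.2, p.2.1), (p.1.1, p.2.2.1), (p.1.2, p.2.2.2)})

noncomputable def im5c [LinearOrder Y] : Finset (Finset (X × Y)) :=
  (Finset.univ.offDiag ×ˢ SOT starT).image
    (fun p : (X × X) × (Y × Y × Y) => {(p.1.2, p.2.1), (p.1.2, p.2.2.1), (p.1.1, p.2.2.2)})

noncomputable def im6 : Finset (Finset (X × Y)) :=
  (Finset.univ.offDiag ×ˢ Finset.univ.offDiag).image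
    (fun p : (X × X) × (Y × Y) => {(p.1.1, p.2.1), (p.1.1, p.2.2), (p.1.2, p.2.2)})

variable {starS} {starT}
variable (hS : IsSteinerQuasigroup starS) (hT : IsSteinerQuasigroup starT)
include hS hT

lemma hP : IsSteinerQuasigroup (pstar starS starT) := by
  refine ⟨fun p => ?_, fun p q => ?_, fun p q => ?_⟩ <;>
    simp only [pstar, Prod.ext_iff]
  · exact ⟨hS.1 _, hT.1 _⟩
  · exact ⟨hS.2.1 _ _, hT.2.1 _ _⟩
  · exact ⟨hS.2.2 _ _, hT.2.2 _ _⟩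

lemma real1 {x y z : Y} (a : X) (d12 : x ≠ y) (d13 : x ≠ z) (d23 : y ≠ z) :
    ({(a, starT x y), (a, starT y z), (a, starT z x)} : Finset (X × Y)) ∈
      BSet (pstar starS starT) := by
  have H := mem_BSet_of (hP hS hT) (a := (a, x)) (b := (a, y)) (c := (a, z))
    (by simp [d12]) (by simp [d13]) (by simp [d23])
  simpa [pstar, hS.1] using H

lemma real2 {a b c : X} (x : Y) (d12 : a ≠ b) (d13 : a ≠ c) (d23 : b ≠ c) :
    ({(starS a b, x), (starS b c, x), (starS c a, x)} : Finset (X × Y)) ∈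
      BSet (pstar starS starT) := by
  have H := mem_BSet_of (hP hS hT) (a := (a, x)) (b := (b, x)) (c := (c, x))
    (by simp [d12]) (by simp [d13]) (by simp [d23])
  simpa [pstar, hT.1] using H

lemma real3 {u1 u2 u3 : X} {v1 v2 v3 : Y}
    (du12 : u1 ≠ u2) (du13 : u1 ≠ u3) (du23 : u2 ≠ u3)
    (dv12 : v1 ≠ v2) (dv13 : v1 ≠ v3) (dv23 : v2 ≠ v3)
    (hU : ({u1, u2, u3} : Finset X) ∈ BSet starS)
    (hV : ({v1, v2, v3} : Finset Y) ∈ BSet starT) :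
    ({(u1, v1), (u2, v2), (u3, v3)} : Finset (X × Y)) ∈ BSet (pstar starS starT) := by
  obtain ⟨a, b, c, e12, e13, e23, f1, f2, f3⟩ := ordered_triangle_real hS du12 du13 du23 hU
  obtain ⟨x, y, z, g12, g13, g23, k1, k2, k3⟩ := ordered_triangle_real hT dv12 dv13 dv23 hV
  have H := mem_BSet_of (hP hS hT) (a := (a, x)) (b := (b, y)) (c := (c, z))
    (by simp [e12]) (by simp [e13]) (by simp [e23])
  simpa [pstar, f1, f2, f3, k1, k2, k3] using H

lemma real4 {u1 u2 u3 : X} {x w : Y}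
    (du12 : u1 ≠ u2) (du13 : u1 ≠ u3) (du23 : u2 ≠ u3) (hxw : x ≠ w)
    (hU : ({u1, u2, u3} : Finset X) ∈ BSet starS) :
    ({(u1, x), (u2, w), (u3, w)} : Finset (X × Y)) ∈ BSet (pstar starS starT) := by
  obtain ⟨a, b, c, e12, e13, e23, f1, f2, f3⟩ := ordered_triangle_real hS du12 du13 du23 hU
  have H := mem_BSet_of (hP hS hT) (a := (a, x)) (b := (b, x)) (c := (c, starT x w))
    (by simp [e12]) (by simp [e13]) (by simp [e23])
  have c1 : starT x x = x := hT.1 x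
  have c2 : starT x (starT x w) = w := hT.2.2 x w
  have c3 : starT (starT x w) x = w := by rw [hT.2.1]; exact hT.2.2 x w
  simpa [pstar, f1, f2, f3, c1, c2, c3] using H

lemma real5 {v1 v2 v3 : Y} {p q : X}
    (dv12 : v1 ≠ v2) (dv13 : v1 ≠ v3) (dv23 : v2 ≠ v3) (hpq : p ≠ q)
    (hV : ({v1, v2, v3} : Finset Y) ∈ BSet starT) :
    ({(p, v1), (q, v2), (q, v3)} : Finset (X × Y)) ∈ BSet (pstar starS starT) := by
  obtain ⟨x, y, z, g12, g13, g23, k1, k2, k3⟩ := ordered_triangle_real hT dv12 dv13 dv23 hV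
  have H := mem_BSet_of (hP hS hT) (a := (p, x)) (b := (p, y)) (c := (starS p q, z))
    (by simp [g12]) (by simp [(star_ne_left hS hpq).symm]) (by simp [(star_ne_left hS hpq).symm])
  have c1 : starS p p = p := hS.1 p
  have c2 : starS p (starS p q) = q := hS.2.2 p q
  have c3 : starS (starS p q) p = q := by rw [hS.2.1]; exact hS.2.2 p q
  simpa [pstar, k1, k2, k3, c1, c2, c3] using H

lemma real6 {u u' : X} {v v' : Y} (hu : u ≠ u') (hv : v ≠ v') :
    ({(u, v), (u, v'), (u', v')} : Finset (X × Y)) ∈ BSet (pstar starS starT) := by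
  have hc : u' ≠ starS u' u := (star_ne_left hS (Ne.symm hu)).symm
  have hx : starT v v' ≠ v := star_ne_left hT hv
  have H := mem_BSet_of (hP hS hT) (a := (u', starT v v')) (b := (u', v))
    (c := (starS u' u, v)) (by simp [hx]) (by simp [hc]) (by simp [hc])
  have c1 : starS u' u' = u' := hS.1 u'
  have c2 : starS u' (starS u' u) = u := hS.2.2 u' u
  have c3 : starS (starS u' u) u' = u := by rw [hS.2.1]; exact hS.2.2 u' u
  have d1 : starT (starT v v') v = v' := by rw [hT.2.1]; exact hT.2.2 v v'
  have d2 : starT v v = v := hT.1 v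
  have d3 : starT v (starT v v') = v' := hT.2.2 v v'
  have H' : ({(u', v'), (u, v), (u, v')} : Finset (X × Y)) ∈ BSet (pstar starS starT) := by
    simpa [pstar, c1, c2, c3, d1, d2, d3] using H
  rwa [trot] at H'

omit hS hT

lemma mem_SOS [LinearOrder X] {u : X × X × X} :
    u ∈ SOS starS ↔ u.1 < u.2.1 ∧ u.2.1 < u.2.2 ∧
      ({u.1, u.2.1, u.2.2} : Finset X) ∈ BSet starS := by
  simp [SOS]

lemma mem_SOT [LinearOrder Y] {v : Y × Y × Y} :
    v ∈ SOT starT ↔ v.1 < v.2.1 ∧ v.2.1 < v.2.2 ∧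
      ({v.1, v.2.1, v.2.2} : Finset Y) ∈ BSet starT := by
  simp [SOT]

lemma mem_OT {v : Y × Y × Y} :
    v ∈ OT starT ↔ v.1 ≠ v.2.1 ∧ v.1 ≠ v.2.2 ∧ v.2.1 ≠ v.2.2 ∧
      ({v.1, v.2.1, v.2.2} : Finset Y) ∈ BSet starT := by
  simp [OT]

lemma img_fst3 (p1 p2 p3 : X × Y) :
    ({p1, p2, p3} : Finset (X × Y)).image Prod.fst = {p1.1, p2.1, p3.1} := by
  simp [Finset.image_insert]

lemma img_snd3 (p1 p2 p3 : X × Y) :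
    ({p1, p2, p3} : Finset (X × Y)).image Prod.snd = {p1.2, p2.2, p3.2} := by
  simp [Finset.image_insert]

lemma card_pair' {α : Type*} [DecidableEq α] {a b : α} (h : a ≠ b) :
    ({a, b} : Finset α).card = 2 := by
  rw [Finset.card_insert_of_notMem (by simp [h]), Finset.card_singleton]

include hT in
lemma pat_im1 {F : Finset (X × Y)} (hF : F ∈ im1 starT) :
    (F.image Prod.fst).card = 1 ∧ (F.image Prod.snd).card = 3 := by
  obtain ⟨⟨a, t⟩, hdom, rfl⟩ := Finset.mem_image.mp hF
  have ht : t ∈ BSet starT := mem_BF.mp (Finset.mem_product.mp hdom).2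
  have hcard := BSet_card3 hT ht
  have hne : t.Nonempty := Finset.card_pos.mp (by omega)
  constructor
  · rw [Finset.image_image]
    have h1 : (Prod.fst ∘ fun v : Y => (a, v)) = fun _ => a := rfl
    rw [h1, Finset.image_const hne, Finset.card_singleton]
  · rw [Finset.image_image]
    have h1 : (Prod.snd ∘ fun v : Y => (a, v)) = id := rfl
    rw [h1, Finset.image_id, hcard]

include hS in
lemma pat_im2 {F : Finset (X × Y)} (hF : F ∈ im2 starS) :
    (F.image Prod.fst).card = 3 ∧ (F.image Prod.snd).card = 1 := by
  obtain ⟨⟨s, x⟩, hdom, rfl⟩ := Finset.mem_image.mp hF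
  have hs : s ∈ BSet starS := mem_BF.mp (Finset.mem_product.mp hdom).1
  have hcard := BSet_card3 hS hs
  have hne : s.Nonempty := Finset.card_pos.mp (by omega)
  constructor
  · rw [Finset.image_image]
    have h1 : (Prod.fst ∘ fun u : X => (u, x)) = id := rfl
    rw [h1, Finset.image_id, hcard]
  · rw [Finset.image_image]
    have h1 : (Prod.snd ∘ fun u : X => (u, x)) = fun _ => x := rfl
    rw [h1, Finset.image_const hne, Finset.card_singleton]

lemma pat_im3 [LinearOrder X] {F : Finset (X × Y)} (hF : F ∈ im3 starS starT) :
    (F.image Prod.fst).card = 3 ∧ (F.image Prod.snd).card = 3 := by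
  obtain ⟨⟨⟨u1, u2, u3⟩, ⟨v1, v2, v3⟩⟩, hdom, rfl⟩ := Finset.mem_image.mp hF
  obtain ⟨hU, hV⟩ := Finset.mem_product.mp hdom
  obtain ⟨s1, s2, -⟩ := mem_SOS.mp hU
  obtain ⟨d1, d2, d3, -⟩ := mem_OT.mp hV
  rw [img_fst3, img_snd3]
  exact ⟨card3 s1.ne (s1.trans s2).ne s2.ne, card3 d1 d2 d3⟩

lemma pat_im4a [LinearOrder X] {F : Finset (X × Y)} (hF : F ∈ im4a starS) :
    (F.image Prod.fst).card = 3 ∧ (F.image Prod.snd).card = 2 := by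
  obtain ⟨⟨⟨u1, u2, u3⟩, ⟨x, w⟩⟩, hdom, rfl⟩ := Finset.mem_image.mp hF
  obtain ⟨hU, hV⟩ := Finset.mem_product.mp hdom
  obtain ⟨s1, s2, -⟩ := mem_SOS.mp hU
  have hxw : x ≠ w := (Finset.mem_offDiag.mp hV).2.2
  rw [img_fst3, img_snd3]
  refine ⟨card3 s1.ne (s1.trans s2).ne s2.ne, ?_⟩
  have h2 : ({x, w, w} : Finset Y) = {x, w} := by ext p; simp
  rw [h2]; exact card_pair' hxw

lemma pat_im4b [LinearOrder X] {F : Finset (X × Y)} (hF : F ∈ im4b starS) :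
    (F.image Prod.fst).card = 3 ∧ (F.image Prod.snd).card = 2 := by
  obtain ⟨⟨⟨u1, u2, u3⟩, ⟨x, w⟩⟩, hdom, rfl⟩ := Finset.mem_image.mp hF
  obtain ⟨hU, hV⟩ := Finset.mem_product.mp hdom
  obtain ⟨s1, s2, -⟩ := mem_SOS.mp hU
  have hxw : x ≠ w := (Finset.mem_offDiag.mp hV).2.2
  rw [img_fst3, img_snd3]
  refine ⟨card3 s1.ne (s1.trans s2).ne s2.ne, ?_⟩
  have h2 : ({w, x, w} : Finset Y) = {x, w} := by ext p; simp [or_comm]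
  rw [h2]; exact card_pair' hxw

lemma pat_im4c [LinearOrder X] {F : Finset (X × Y)} (hF : F ∈ im4c starS) :
    (F.image Prod.fst).card = 3 ∧ (F.image Prod.snd).card = 2 := by
  obtain ⟨⟨⟨u1, u2, u3⟩, ⟨x, w⟩⟩, hdom, rfl⟩ := Finset.mem_image.mp hF
  obtain ⟨hU, hV⟩ := Finset.mem_product.mp hdom
  obtain ⟨s1, s2, -⟩ := mem_SOS.mp hU
  have hxw : x ≠ w := (Finset.mem_offDiag.mp hV).2.2
  rw [img_fst3, img_snd3]
  refine ⟨card3 s1.ne (s1.trans s2).ne s2.ne, ?_⟩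
  have h2 : ({w, w, x} : Finset Y) = {x, w} := by ext p; simp; tauto
  rw [h2]; exact card_pair' hxw

lemma pat_im5a [LinearOrder Y] {F : Finset (X × Y)} (hF : F ∈ im5a starT) :
    (F.image Prod.fst).card = 2 ∧ (F.image Prod.snd).card = 3 := by
  obtain ⟨⟨⟨p, q⟩, ⟨v1, v2, v3⟩⟩, hdom, rfl⟩ := Finset.mem_image.mp hF
  obtain ⟨hU, hV⟩ := Finset.mem_product.mp hdom
  obtain ⟨s1, s2, -⟩ := mem_SOT.mp hV
  have hpq : p ≠ q := (Finset.mem_offDiag.mp hU).2.2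
  rw [img_fst3, img_snd3]
  refine ⟨?_, card3 s1.ne (s1.trans s2).ne s2.ne⟩
  have h2 : ({p, q, q} : Finset X) = {p, q} := by ext r; simp
  rw [h2]; exact card_pair' hpq

lemma pat_im5b [LinearOrder Y] {F : Finset (X × Y)} (hF : F ∈ im5b starT) :
    (F.image Prod.fst).card = 2 ∧ (F.image Prod.snd).card = 3 := by
  obtain ⟨⟨⟨p, q⟩, ⟨v1, v2, v3⟩⟩, hdom, rfl⟩ := Finset.mem_image.mp hF
  obtain ⟨hU, hV⟩ := Finset.mem_product.mp hdom
  obtain ⟨s1, s2, -⟩ := mem_SOT.mp hV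
  have hpq : p ≠ q := (Finset.mem_offDiag.mp hU).2.2
  rw [img_fst3, img_snd3]
  refine ⟨?_, card3 s1.ne (s1.trans s2).ne s2.ne⟩
  have h2 : ({q, p, q} : Finset X) = {p, q} := by ext r; simp [or_comm]
  rw [h2]; exact card_pair' hpq

lemma pat_im5c [LinearOrder Y] {F : Finset (X × Y)} (hF : F ∈ im5c starT) :
    (F.image Prod.fst).card = 2 ∧ (F.image Prod.snd).card = 3 := by
  obtain ⟨⟨⟨p, q⟩, ⟨v1, v2, v3⟩⟩, hdom, rfl⟩ := Finset.mem_image.mp hF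
  obtain ⟨hU, hV⟩ := Finset.mem_product.mp hdom
  obtain ⟨s1, s2, -⟩ := mem_SOT.mp hV
  have hpq : p ≠ q := (Finset.mem_offDiag.mp hU).2.2
  rw [img_fst3, img_snd3]
  refine ⟨?_, card3 s1.ne (s1.trans s2).ne s2.ne⟩
  have h2 : ({q, q, p} : Finset X) = {p, q} := by ext r; simp; tauto
  rw [h2]; exact card_pair' hpq

lemma pat_im6 {F : Finset (X × Y)} (hF : F ∈ (im6 : Finset (Finset (X × Y)))) :
    (F.image Prod.fst).card = 2 ∧ (F.image Prod.snd).card = 2 := by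
  obtain ⟨⟨⟨u, u'⟩, ⟨v, v'⟩⟩, hdom, rfl⟩ := Finset.mem_image.mp hF
  obtain ⟨hU, hV⟩ := Finset.mem_product.mp hdom
  have hu : u ≠ u' := (Finset.mem_offDiag.mp hU).2.2
  have hv : v ≠ v' := (Finset.mem_offDiag.mp hV).2.2
  rw [img_fst3, img_snd3]
  constructor
  · have h2 : ({u, u, u'} : Finset X) = {u, u'} := by ext r; simp
    rw [h2]; exact card_pair' hu
  · have h2 : ({v, v', v'} : Finset Y) = {v, v'} := by ext r; simp
    rw [h2]; exact card_pair' hv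

lemma disj_aux {A B : Finset (Finset (X × Y))} {pA pB : ℕ × ℕ}
    (hA : ∀ F ∈ A, ((F.image Prod.fst).card, (F.image Prod.snd).card) = pA)
    (hB : ∀ F ∈ B, ((F.image Prod.fst).card, (F.image Prod.snd).card) = pB)
    (h : pA ≠ pB) : Disjoint A B :=
  Finset.disjoint_left.mpr fun F h1 h2 => h ((hA F h1).symm.trans (hB F h2))

section Orderings
variable {α : Type*} [DecidableEq α]

lemma six_card {a b c : α} (d12 : a ≠ b) (d13 : a ≠ c) (d23 : b ≠ c) :
    ({((a,b,c) : α×α×α), (a,c,b), (b,a,c), (b,c,a), (c,a,b), (c,b,a)} :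
      Finset (α×α×α)).card = 6 := by
  have e21 := d12.symm; have e31 := d13.symm; have e32 := d23.symm
  rw [Finset.card_insert_of_notMem (by simp [Prod.ext_iff, d12, d13, d23, e21, e31, e32]),
    Finset.card_insert_of_notMem (by simp [Prod.ext_iff, d12, d13, d23, e21, e31, e32]),
    Finset.card_insert_of_notMem (by simp [Prod.ext_iff, d12, d13, d23, e21, e31, e32]),
    Finset.card_insert_of_notMem (by simp [Prod.ext_iff, d12, d13, d23, e21, e31, e32]),
    Finset.card_insert_of_notMem (by simp [Prod.ext_iff, d12, d13, d23, e21, e31, e32]),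
    Finset.card_singleton]

lemma orderings_iff {a b c : α} (d12 : a ≠ b) (d13 : a ≠ c) (d23 : b ≠ c)
    (v1 v2 v3 : α) :
    (v1 ≠ v2 ∧ v1 ≠ v3 ∧ v2 ≠ v3 ∧ ({v1, v2, v3} : Finset α) = {a, b, c}) ↔
      ((v1,v2,v3) : α×α×α) ∈ ({((a,b,c) : α×α×α), (a,c,b), (b,a,c), (b,c,a),
        (c,a,b), (c,b,a)} : Finset (α×α×α)) := by
  constructor
  · rintro ⟨e12, e13, e23, hset⟩
    rcases triple_eq_cases e12 e13 e23 hset with H | H | H | H | H | H <;>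
      obtain ⟨f1, f2, f3⟩ := H <;> subst_vars <;> simp
  · intro hmem
    simp only [Finset.mem_insert, Finset.mem_singleton, Prod.ext_iff] at hmem
    rcases hmem with H | H | H | H | H | H <;> obtain ⟨f1, f2, f3⟩ := H <;> subst_vars <;>
      (refine ⟨?_, ?_, ?_, by ext p; simp; try tauto⟩) <;> first | assumption | (symm; assumption)
end Orderings

include hS in
lemma card_SOS [LinearOrder X] : (SOS starS).card = betaInv starS := by
  rw [← card_BF starS]
  apply Finset.card_bij (fun u _ => ({u.1, u.2.1, u.2.2} : Finset X))
  · intro u hu; exact mem_BF.mpr (mem_SOS.mp hu).2.2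
  · rintro ⟨u1, u2, u3⟩ hu ⟨w1, w2, w3⟩ hw e
    obtain ⟨s1, s2, -⟩ := mem_SOS.mp hu
    obtain ⟨t1, t2, -⟩ := mem_SOS.mp hw
    obtain ⟨e1, e2, e3⟩ := sorted3_unique s1 s2 t1 t2 e
    exact Prod.ext e1 (Prod.ext e2 e3)
  · intro s hs
    obtain ⟨a, b, c, d12, d13, d23, rfl⟩ :=
      Finset.card_eq_three.mp (BSet_card3 hS (mem_BF.mp hs))
    obtain ⟨u1, u2, u3, s1, s2, hset⟩ := exists_sorted3 d12 d13 d23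
    exact ⟨(u1, u2, u3), mem_SOS.mpr ⟨s1, s2, hset ▸ mem_BF.mp hs⟩, hset⟩

include hT in
lemma card_SOT [LinearOrder Y] : (SOT starT).card = betaInv starT := by
  rw [← card_BF starT]
  apply Finset.card_bij (fun v _ => ({v.1, v.2.1, v.2.2} : Finset Y))
  · intro v hv; exact mem_BF.mpr (mem_SOT.mp hv).2.2
  · rintro ⟨u1, u2, u3⟩ hu ⟨w1, w2, w3⟩ hw e
    obtain ⟨s1, s2, -⟩ := mem_SOT.mp hu
    obtain ⟨t1, t2, -⟩ := mem_SOT.mp hw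
    obtain ⟨e1, e2, e3⟩ := sorted3_unique s1 s2 t1 t2 e
    exact Prod.ext e1 (Prod.ext e2 e3)
  · intro t ht
    obtain ⟨a, b, c, d12, d13, d23, rfl⟩ :=
      Finset.card_eq_three.mp (BSet_card3 hT (mem_BF.mp ht))
    obtain ⟨u1, u2, u3, s1, s2, hset⟩ := exists_sorted3 d12 d13 d23
    exact ⟨(u1, u2, u3), mem_SOT.mpr ⟨s1, s2, hset ▸ mem_BF.mp ht⟩, hset⟩

include hT in
lemma card_OT : (OT starT).card = 6 * betaInv starT := by
  rw [← card_BF starT]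
  rw [Finset.card_eq_sum_card_fiberwise
    (f := fun v : Y × Y × Y => ({v.1, v.2.1, v.2.2} : Finset Y)) (t := BF starT)
    (fun v hv => mem_BF.mpr (mem_OT.mp hv).2.2.2)]
  rw [Finset.sum_congr rfl (fun t ht => ?_), Finset.sum_const, smul_eq_mul, mul_comm]
  obtain ⟨a, b, c, d12, d13, d23, rfl⟩ :=
    Finset.card_eq_three.mp (BSet_card3 hT (mem_BF.mp ht))
  rw [show ((OT starT).filter
      (fun v : Y × Y × Y => ({v.1, v.2.1, v.2.2} : Finset Y) = {a, b, c})) =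
      ({((a,b,c) : Y×Y×Y), (a,c,b), (b,a,c), (b,c,a), (c,a,b), (c,b,a)} :
        Finset (Y×Y×Y)) from ?_]
  · exact six_card d12 d13 d23
  · ext ⟨v1, v2, v3⟩
    rw [Finset.mem_filter, mem_OT]
    constructor
    · rintro ⟨⟨e12, e13, e23, -⟩, hset⟩
      exact (orderings_iff d12 d13 d23 v1 v2 v3).mp ⟨e12, e13, e23, hset⟩
    · intro hmem
      obtain ⟨e12, e13, e23, hset⟩ := (orderings_iff d12 d13 d23 v1 v2 v3).mpr hmem
      exact ⟨⟨e12, e13, e23, hset ▸ mem_BF.mp ht⟩, hset⟩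

include hT in
lemma card_im1 : (im1 starT (X := X)).card = Fintype.card X * betaInv starT := by
  rw [im1, Finset.card_image_of_injOn, Finset.card_product, Finset.card_univ, card_BF]
  rintro ⟨a, t⟩ h1 ⟨a', t'⟩ h2 e
  simp only [Finset.coe_product, Set.mem_prod, Finset.mem_coe, Finset.mem_product] at h1 h2
  have e' : t.image (fun v => (a, v)) = t'.image (fun v => (a', v)) := e
  have ht : t ∈ BSet starT := mem_BF.mp h1.2
  have hc := BSet_card3 hT ht
  obtain ⟨y, hy⟩ := Finset.card_pos.mp (by omega : 0 < t.card)
  have hmem : (a, y) ∈ t'.image (fun v => (a', v)) := by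
    rw [← e']; exact Finset.mem_image_of_mem _ hy
  obtain ⟨y', -, hy'⟩ := Finset.mem_image.mp hmem
  have ha : a' = a := congrArg Prod.fst hy'
  rw [ha] at e'
  have ht' : t = t' :=
    Finset.image_injective (f := fun v : Y => (a, v))
      (fun v w hvw => congrArg Prod.snd hvw) e'
  rw [ha, ht']

include hS in
lemma card_im2 : (im2 starS (Y := Y)).card = Fintype.card Y * betaInv starS := by
  rw [im2, Finset.card_image_of_injOn, Finset.card_product, Finset.card_univ, card_BF,
    mul_comm]
  rintro ⟨s, x⟩ h1 ⟨s', x'⟩ h2 e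
  simp only [Finset.coe_product, Set.mem_prod, Finset.mem_coe, Finset.mem_product] at h1 h2
  have e' : s.image (fun u => (u, x)) = s'.image (fun u => (u, x')) := e
  have hs : s ∈ BSet starS := mem_BF.mp h1.1
  have hc := BSet_card3 hS hs
  obtain ⟨u, hu⟩ := Finset.card_pos.mp (by omega : 0 < s.card)
  have hmem : (u, x) ∈ s'.image (fun w => (w, x')) := by
    rw [← e']; exact Finset.mem_image_of_mem _ hu
  obtain ⟨u', -, hu'⟩ := Finset.mem_image.mp hmem
  have hx : x' = x := congrArg Prod.snd hu'
  rw [hx] at e'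
  have hs' : s = s' :=
    Finset.image_injective (f := fun w : X => (w, x))
      (fun v w hvw => congrArg Prod.fst hvw) e'
  rw [hx, hs']

include hS hT in
lemma card_im3 [LinearOrder X] :
    (im3 starS starT).card = betaInv starS * (6 * betaInv starT) := by
  rw [im3, Finset.card_image_of_injOn, Finset.card_product, card_SOS hS, card_OT hT]
  rintro ⟨⟨u1, u2, u3⟩, ⟨v1, v2, v3⟩⟩ h1 ⟨⟨w1, w2, w3⟩, ⟨r1, r2, r3⟩⟩ h2 e
  simp only [Finset.coe_product, Set.mem_prod, Finset.mem_coe] at h1 h2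
  obtain ⟨hU, hV⟩ := h1
  obtain ⟨hW, hR⟩ := h2
  have e' : ({(u1, v1), (u2, v2), (u3, v3)} : Finset (X × Y)) = {(w1, r1), (w2, r2), (w3, r3)} := e
  obtain ⟨s1, s2, -⟩ := mem_SOS.mp hU
  obtain ⟨t1, t2, -⟩ := mem_SOS.mp hW
  have efst := congrArg (Finset.image Prod.fst) e'
  rw [img_fst3, img_fst3] at efst
  obtain ⟨e1, e2, e3⟩ := sorted3_unique s1 s2 t1 t2 efst
  simp only at e1 e2 e3
  subst e1; subst e2; subst e3
  have d12 : u1 ≠ u2 := s1.ne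
  have d13 : u1 ≠ u3 := (s1.trans s2).ne
  have d23 : u2 ≠ u3 := s2.ne
  have m1 : ((u1, v1) : X × Y) ∈ ({(u1, r1), (u2, r2), (u3, r3)} : Finset (X × Y)) := by
    rw [← e']; simp
  have m2 : ((u2, v2) : X × Y) ∈ ({(u1, r1), (u2, r2), (u3, r3)} : Finset (X × Y)) := by
    rw [← e']; simp
  have m3 : ((u3, v3) : X × Y) ∈ ({(u1, r1), (u2, r2), (u3, r3)} : Finset (X × Y)) := by
    rw [← e']; simp
  simp only [mem3, Prod.ext_iff] at m1 m2 m3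
  have f1 : v1 = r1 := by
    rcases m1 with ⟨-, f⟩ | ⟨h, -⟩ | ⟨h, -⟩
    exacts [f, absurd h d12, absurd h d13]
  have f2 : v2 = r2 := by
    rcases m2 with ⟨h, -⟩ | ⟨-, f⟩ | ⟨h, -⟩
    exacts [absurd h d12.symm, f, absurd h d23]
  have f3 : v3 = r3 := by
    rcases m3 with ⟨h, -⟩ | ⟨h, -⟩ | ⟨-, f⟩
    exacts [absurd h d13.symm, absurd h d23.symm, f]
  simp [f1, f2, f3]

include hS in
lemma card_im4a [LinearOrder X] :
    (im4a starS (Y := Y)).card =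
      betaInv starS * (Fintype.card Y * Fintype.card Y - Fintype.card Y) := by
  rw [im4a, Finset.card_image_of_injOn, Finset.card_product, card_SOS hS,
    Finset.offDiag_card, Finset.card_univ]
  rintro ⟨⟨u1, u2, u3⟩, ⟨x, w⟩⟩ h1 ⟨⟨w1, w2, w3⟩, ⟨x', w'⟩⟩ h2 e
  simp only [Finset.coe_product, Set.mem_prod, Finset.mem_coe] at h1 h2
  have e' : ({(u1, x), (u2, w), (u3, w)} : Finset (X × Y)) =
    {(w1, x'), (w2, w'), (w3, w')} := e
  obtain ⟨s1, s2, -⟩ := mem_SOS.mp h1.1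
  obtain ⟨t1, t2, -⟩ := mem_SOS.mp h2.1
  have efst := congrArg (Finset.image Prod.fst) e'
  rw [img_fst3, img_fst3] at efst
  obtain ⟨e1, e2, e3⟩ := sorted3_unique s1 s2 t1 t2 efst
  simp only at e1 e2 e3
  subst e1; subst e2; subst e3
  have d12 : u1 ≠ u2 := s1.ne
  have d13 : u1 ≠ u3 := (s1.trans s2).ne
  have d23 : u2 ≠ u3 := s2.ne
  have m1 : ((u1, x) : X × Y) ∈ ({(u1, x'), (u2, w'), (u3, w')} : Finset (X × Y)) := by
    rw [← e']; simp
  have m2 : ((u2, w) : X × Y) ∈ ({(u1, x'), (u2, w'), (u3, w')} : Finset (X × Y)) := by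
    rw [← e']; simp
  simp only [mem3, Prod.ext_iff] at m1 m2
  have f1 : x = x' := by
    rcases m1 with ⟨-, f⟩ | ⟨h, -⟩ | ⟨h, -⟩
    exacts [f, absurd h d12, absurd h d13]
  have f2 : w = w' := by
    rcases m2 with ⟨h, -⟩ | ⟨-, f⟩ | ⟨h, -⟩
    exacts [absurd h d12.symm, f, absurd h d23]
  simp [f1, f2]

include hS in
lemma card_im4b [LinearOrder X] :
    (im4b starS (Y := Y)).card =
      betaInv starS * (Fintype.card Y * Fintype.card Y - Fintype.card Y) := by
  rw [im4b, Finset.card_image_of_injOn, Finset.card_product, card_SOS hS,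
    Finset.offDiag_card, Finset.card_univ]
  rintro ⟨⟨u1, u2, u3⟩, ⟨x, w⟩⟩ h1 ⟨⟨w1, w2, w3⟩, ⟨x', w'⟩⟩ h2 e
  simp only [Finset.coe_product, Set.mem_prod, Finset.mem_coe] at h1 h2
  have e' : ({(u1, w), (u2, x), (u3, w)} : Finset (X × Y)) =
    {(w1, w'), (w2, x'), (w3, w')} := e
  obtain ⟨s1, s2, -⟩ := mem_SOS.mp h1.1
  obtain ⟨t1, t2, -⟩ := mem_SOS.mp h2.1
  have efst := congrArg (Finset.image Prod.fst) e'
  rw [img_fst3, img_fst3] at efst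
  obtain ⟨e1, e2, e3⟩ := sorted3_unique s1 s2 t1 t2 efst
  simp only at e1 e2 e3
  subst e1; subst e2; subst e3
  have d12 : u1 ≠ u2 := s1.ne
  have d13 : u1 ≠ u3 := (s1.trans s2).ne
  have d23 : u2 ≠ u3 := s2.ne
  have m1 : ((u2, x) : X × Y) ∈ ({(u1, w'), (u2, x'), (u3, w')} : Finset (X × Y)) := by
    rw [← e']; simp
  have m2 : ((u1, w) : X × Y) ∈ ({(u1, w'), (u2, x'), (u3, w')} : Finset (X × Y)) := by
    rw [← e']; simp
  simp only [mem3, Prod.ext_iff] at m1 m2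
  have f1 : x = x' := by
    rcases m1 with ⟨h, -⟩ | ⟨-, f⟩ | ⟨h, -⟩
    exacts [absurd h d12.symm, f, absurd h d23]
  have f2 : w = w' := by
    rcases m2 with ⟨-, f⟩ | ⟨h, -⟩ | ⟨h, -⟩
    exacts [f, absurd h d12, absurd h d13]
  simp [f1, f2]

include hS in
lemma card_im4c [LinearOrder X] :
    (im4c starS (Y := Y)).card =
      betaInv starS * (Fintype.card Y * Fintype.card Y - Fintype.card Y) := by
  rw [im4c, Finset.card_image_of_injOn, Finset.card_product, card_SOS hS,
    Finset.offDiag_card, Finset.card_univ]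
  rintro ⟨⟨u1, u2, u3⟩, ⟨x, w⟩⟩ h1 ⟨⟨w1, w2, w3⟩, ⟨x', w'⟩⟩ h2 e
  simp only [Finset.coe_product, Set.mem_prod, Finset.mem_coe] at h1 h2
  have e' : ({(u1, w), (u2, w), (u3, x)} : Finset (X × Y)) =
    {(w1, w'), (w2, w'), (w3, x')} := e
  obtain ⟨s1, s2, -⟩ := mem_SOS.mp h1.1
  obtain ⟨t1, t2, -⟩ := mem_SOS.mp h2.1
  have efst := congrArg (Finset.image Prod.fst) e'
  rw [img_fst3, img_fst3] at efst
  obtain ⟨e1, e2, e3⟩ := sorted3_unique s1 s2 t1 t2 efst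
  simp only at e1 e2 e3
  subst e1; subst e2; subst e3
  have d12 : u1 ≠ u2 := s1.ne
  have d13 : u1 ≠ u3 := (s1.trans s2).ne
  have d23 : u2 ≠ u3 := s2.ne
  have m1 : ((u3, x) : X × Y) ∈ ({(u1, w'), (u2, w'), (u3, x')} : Finset (X × Y)) := by
    rw [← e']; simp
  have m2 : ((u1, w) : X × Y) ∈ ({(u1, w'), (u2, w'), (u3, x')} : Finset (X × Y)) := by
    rw [← e']; simp
  simp only [mem3, Prod.ext_iff] at m1 m2
  have f1 : x = x' := by
    rcases m1 with ⟨h, -⟩ | ⟨h, -⟩ | ⟨-, f⟩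
    exacts [absurd h d13.symm, absurd h d23.symm, f]
  have f2 : w = w' := by
    rcases m2 with ⟨-, f⟩ | ⟨h, -⟩ | ⟨h, -⟩
    exacts [f, absurd h d12, absurd h d13]
  simp [f1, f2]

include hT in
lemma card_im5a [LinearOrder Y] :
    (im5a starT (X := X)).card =
      (Fintype.card X * Fintype.card X - Fintype.card X) * betaInv starT := by
  rw [im5a, Finset.card_image_of_injOn, Finset.card_product, card_SOT hT,
    Finset.offDiag_card, Finset.card_univ]
  rintro ⟨⟨p, q⟩, ⟨v1, v2, v3⟩⟩ h1 ⟨⟨p', q'⟩, ⟨r1, r2, r3⟩⟩ h2 e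
  simp only [Finset.coe_product, Set.mem_prod, Finset.mem_coe] at h1 h2
  have e' : ({(p, v1), (q, v2), (q, v3)} : Finset (X × Y)) =
    {(p', r1), (q', r2), (q', r3)} := e
  obtain ⟨s1, s2, -⟩ := mem_SOT.mp h1.2
  obtain ⟨t1, t2, -⟩ := mem_SOT.mp h2.2
  have esnd := congrArg (Finset.image Prod.snd) e'
  rw [img_snd3, img_snd3] at esnd
  obtain ⟨e1, e2, e3⟩ := sorted3_unique s1 s2 t1 t2 esnd
  simp only at e1 e2 e3
  subst e1; subst e2; subst e3
  have d12 : v1 ≠ v2 := s1.ne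
  have d13 : v1 ≠ v3 := (s1.trans s2).ne
  have d23 : v2 ≠ v3 := s2.ne
  have m1 : ((p, v1) : X × Y) ∈ ({(p', v1), (q', v2), (q', v3)} : Finset (X × Y)) := by
    rw [← e']; simp
  have m2 : ((q, v2) : X × Y) ∈ ({(p', v1), (q', v2), (q', v3)} : Finset (X × Y)) := by
    rw [← e']; simp
  simp only [mem3, Prod.ext_iff] at m1 m2
  have f1 : p = p' := by
    rcases m1 with ⟨f, -⟩ | ⟨-, h⟩ | ⟨-, h⟩
    exacts [f, absurd h d12, absurd h d13]
  have f2 : q = q' := by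
    rcases m2 with ⟨-, h⟩ | ⟨f, -⟩ | ⟨-, h⟩
    exacts [absurd h d12.symm, f, absurd h d23]
  simp [f1, f2]

include hT in
lemma card_im5b [LinearOrder Y] :
    (im5b starT (X := X)).card =
      (Fintype.card X * Fintype.card X - Fintype.card X) * betaInv starT := by
  rw [im5b, Finset.card_image_of_injOn, Finset.card_product, card_SOT hT,
    Finset.offDiag_card, Finset.card_univ]
  rintro ⟨⟨p, q⟩, ⟨v1, v2, v3⟩⟩ h1 ⟨⟨p', q'⟩, ⟨r1, r2, r3⟩⟩ h2 e
  simp only [Finset.coe_product, Set.mem_prod, Finset.mem_coe] at h1 h2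
  have e' : ({(q, v1), (p, v2), (q, v3)} : Finset (X × Y)) =
    {(q', r1), (p', r2), (q', r3)} := e
  obtain ⟨s1, s2, -⟩ := mem_SOT.mp h1.2
  obtain ⟨t1, t2, -⟩ := mem_SOT.mp h2.2
  have esnd := congrArg (Finset.image Prod.snd) e'
  rw [img_snd3, img_snd3] at esnd
  obtain ⟨e1, e2, e3⟩ := sorted3_unique s1 s2 t1 t2 esnd
  simp only at e1 e2 e3
  subst e1; subst e2; subst e3
  have d12 : v1 ≠ v2 := s1.ne
  have d13 : v1 ≠ v3 := (s1.trans s2).ne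
  have d23 : v2 ≠ v3 := s2.ne
  have m1 : ((p, v2) : X × Y) ∈ ({(q', v1), (p', v2), (q', v3)} : Finset (X × Y)) := by
    rw [← e']; simp
  have m2 : ((q, v1) : X × Y) ∈ ({(q', v1), (p', v2), (q', v3)} : Finset (X × Y)) := by
    rw [← e']; simp
  simp only [mem3, Prod.ext_iff] at m1 m2
  have f1 : p = p' := by
    rcases m1 with ⟨-, h⟩ | ⟨f, -⟩ | ⟨-, h⟩
    exacts [absurd h d12.symm, f, absurd h d23]
  have f2 : q = q' := by
    rcases m2 with ⟨f, -⟩ | ⟨-, h⟩ | ⟨-, h⟩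
    exacts [f, absurd h d12, absurd h d13]
  simp [f1, f2]

include hT in
lemma card_im5c [LinearOrder Y] :
    (im5c starT (X := X)).card =
      (Fintype.card X * Fintype.card X - Fintype.card X) * betaInv starT := by
  rw [im5c, Finset.card_image_of_injOn, Finset.card_product, card_SOT hT,
    Finset.offDiag_card, Finset.card_univ]
  rintro ⟨⟨p, q⟩, ⟨v1, v2, v3⟩⟩ h1 ⟨⟨p', q'⟩, ⟨r1, r2, r3⟩⟩ h2 e
  simp only [Finset.coe_product, Set.mem_prod, Finset.mem_coe] at h1 h2
  have e' : ({(q, v1), (q, v2), (p, v3)} : Finset (X × Y)) =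
    {(q', r1), (q', r2), (p', r3)} := e
  obtain ⟨s1, s2, -⟩ := mem_SOT.mp h1.2
  obtain ⟨t1, t2, -⟩ := mem_SOT.mp h2.2
  have esnd := congrArg (Finset.image Prod.snd) e'
  rw [img_snd3, img_snd3] at esnd
  obtain ⟨e1, e2, e3⟩ := sorted3_unique s1 s2 t1 t2 esnd
  simp only at e1 e2 e3
  subst e1; subst e2; subst e3
  have d12 : v1 ≠ v2 := s1.ne
  have d13 : v1 ≠ v3 := (s1.trans s2).ne
  have d23 : v2 ≠ v3 := s2.ne
  have m1 : ((p, v3) : X × Y) ∈ ({(q', v1), (q', v2), (p', v3)} : Finset (X × Y)) := by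
    rw [← e']; simp
  have m2 : ((q, v1) : X × Y) ∈ ({(q', v1), (q', v2), (p', v3)} : Finset (X × Y)) := by
    rw [← e']; simp
  simp only [mem3, Prod.ext_iff] at m1 m2
  have f1 : p = p' := by
    rcases m1 with ⟨-, h⟩ | ⟨-, h⟩ | ⟨f, -⟩
    exacts [absurd h d13.symm, absurd h d23.symm, f]
  have f2 : q = q' := by
    rcases m2 with ⟨f, -⟩ | ⟨-, h⟩ | ⟨-, h⟩
    exacts [f, absurd h d12, absurd h d13]
  simp [f1, f2]

lemma card_im6 :
    (im6 : Finset (Finset (X × Y))).card =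
      (Fintype.card X * Fintype.card X - Fintype.card X) *
        (Fintype.card Y * Fintype.card Y - Fintype.card Y) := by
  rw [im6, Finset.card_image_of_injOn, Finset.card_product,
    Finset.offDiag_card, Finset.offDiag_card, Finset.card_univ, Finset.card_univ]
  rintro ⟨⟨u, u'⟩, ⟨v, v'⟩⟩ h1 ⟨⟨p, p'⟩, ⟨q, q'⟩⟩ h2 e
  simp only [Finset.coe_product, Set.mem_prod, Finset.mem_coe, Finset.mem_offDiag] at h1 h2
  have hu : u ≠ u' := h1.1.2.2
  have hv : v ≠ v' := h1.2.2.2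
  have hp : p ≠ p' := h2.1.2.2
  have hq : q ≠ q' := h2.2.2.2
  have e' : ({(u, v), (u, v'), (u', v')} : Finset (X × Y)) =
    {(p, q), (p, q'), (p', q')} := e
  have m1 : ((u, v) : X × Y) ∈ ({(p, q), (p, q'), (p', q')} : Finset (X × Y)) := by
    rw [← e']; simp
  have m2 : ((u, v') : X × Y) ∈ ({(p, q), (p, q'), (p', q')} : Finset (X × Y)) := by
    rw [← e']; simp
  have m3 : ((u', v') : X × Y) ∈ ({(p, q), (p, q'), (p', q')} : Finset (X × Y)) := by
    rw [← e']; simp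
  have n1 : ((p, q) : X × Y) ∈ ({(u, v), (u, v'), (u', v')} : Finset (X × Y)) := by
    rw [e']; simp
  simp only [mem3, Prod.ext_iff] at m1 m2 m3 n1
  rcases m1 with ⟨a1, a2⟩ | ⟨a1, a2⟩ | ⟨a1, a2⟩ <;>
    rcases m2 with ⟨b1, b2⟩ | ⟨b1, b2⟩ | ⟨b1, b2⟩ <;>
    rcases m3 with ⟨c1, c2⟩ | ⟨c1, c2⟩ | ⟨c1, c2⟩ <;>
    subst_vars <;> simp_all

omit hS hT

lemma mem_psi1 {a : X} {r1 r2 r3 : Y} (hV : ({r1, r2, r3} : Finset Y) ∈ BSet starT) :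
    ({(a, r1), (a, r2), (a, r3)} : Finset (X × Y)) ∈ im1 starT := by
  refine Finset.mem_image.mpr ⟨(a, ({r1, r2, r3} : Finset Y)), ?_, by simp⟩
  exact Finset.mem_product.mpr ⟨Finset.mem_univ _, mem_BF.mpr hV⟩

lemma mem_psi2 {x : Y} {t1 t2 t3 : X} (hU : ({t1, t2, t3} : Finset X) ∈ BSet starS) :
    ({(t1, x), (t2, x), (t3, x)} : Finset (X × Y)) ∈ im2 starS := by
  refine Finset.mem_image.mpr ⟨(({t1, t2, t3} : Finset X), x), ?_, by simp⟩
  exact Finset.mem_product.mpr ⟨mem_BF.mpr hU, Finset.mem_univ _⟩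

lemma mem_psi6 {u u' : X} {v v' : Y} (hu : u ≠ u') (hv : v ≠ v') :
    ({(u, v), (u, v'), (u', v')} : Finset (X × Y)) ∈ (im6 : Finset (Finset (X × Y))) := by
  refine Finset.mem_image.mpr ⟨((u, u'), (v, v')), ?_, rfl⟩
  exact Finset.mem_product.mpr ⟨Finset.mem_offDiag.mpr ⟨Finset.mem_univ _, Finset.mem_univ _, hu⟩,
    Finset.mem_offDiag.mpr ⟨Finset.mem_univ _, Finset.mem_univ _, hv⟩⟩

lemma im3_witness [LinearOrder X] {a1 a2 a3 : X} {b1 b2 b3 : Y}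
    (s1 : a1 < a2) (s2 : a2 < a3) (hU : ({a1, a2, a3} : Finset X) ∈ BSet starS)
    (e12 : b1 ≠ b2) (e13 : b1 ≠ b3) (e23 : b2 ≠ b3)
    (hV : ({b1, b2, b3} : Finset Y) ∈ BSet starT) :
    ({(a1, b1), (a2, b2), (a3, b3)} : Finset (X × Y)) ∈ im3 starS starT := by
  refine Finset.mem_image.mpr ⟨((a1, a2, a3), (b1, b2, b3)), ?_, rfl⟩
  exact Finset.mem_product.mpr ⟨mem_SOS.mpr ⟨s1, s2, hU⟩, mem_OT.mpr ⟨e12, e13, e23, hV⟩⟩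

lemma im4a_witness [LinearOrder X] {a1 a2 a3 : X} {x w : Y}
    (s1 : a1 < a2) (s2 : a2 < a3) (hU : ({a1, a2, a3} : Finset X) ∈ BSet starS)
    (hxw : x ≠ w) :
    ({(a1, x), (a2, w), (a3, w)} : Finset (X × Y)) ∈ im4a starS := by
  refine Finset.mem_image.mpr ⟨((a1, a2, a3), (x, w)), ?_, rfl⟩
  exact Finset.mem_product.mpr ⟨mem_SOS.mpr ⟨s1, s2, hU⟩,
    Finset.mem_offDiag.mpr ⟨Finset.mem_univ _, Finset.mem_univ _, hxw⟩⟩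

lemma im4b_witness [LinearOrder X] {a1 a2 a3 : X} {x w : Y}
    (s1 : a1 < a2) (s2 : a2 < a3) (hU : ({a1, a2, a3} : Finset X) ∈ BSet starS)
    (hxw : x ≠ w) :
    ({(a1, w), (a2, x), (a3, w)} : Finset (X × Y)) ∈ im4b starS := by
  refine Finset.mem_image.mpr ⟨((a1, a2, a3), (x, w)), ?_, rfl⟩
  exact Finset.mem_product.mpr ⟨mem_SOS.mpr ⟨s1, s2, hU⟩,
    Finset.mem_offDiag.mpr ⟨Finset.mem_univ _, Finset.mem_univ _, hxw⟩⟩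

lemma im4c_witness [LinearOrder X] {a1 a2 a3 : X} {x w : Y}
    (s1 : a1 < a2) (s2 : a2 < a3) (hU : ({a1, a2, a3} : Finset X) ∈ BSet starS)
    (hxw : x ≠ w) :
    ({(a1, w), (a2, w), (a3, x)} : Finset (X × Y)) ∈ im4c starS := by
  refine Finset.mem_image.mpr ⟨((a1, a2, a3), (x, w)), ?_, rfl⟩
  exact Finset.mem_product.mpr ⟨mem_SOS.mpr ⟨s1, s2, hU⟩,
    Finset.mem_offDiag.mpr ⟨Finset.mem_univ _, Finset.mem_univ _, hxw⟩⟩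

lemma im5a_witness [LinearOrder Y] {b1 b2 b3 : Y} {p q : X}
    (s1 : b1 < b2) (s2 : b2 < b3) (hV : ({b1, b2, b3} : Finset Y) ∈ BSet starT)
    (hpq : p ≠ q) :
    ({(p, b1), (q, b2), (q, b3)} : Finset (X × Y)) ∈ im5a starT := by
  refine Finset.mem_image.mpr ⟨((p, q), (b1, b2, b3)), ?_, rfl⟩
  exact Finset.mem_product.mpr ⟨Finset.mem_offDiag.mpr
    ⟨Finset.mem_univ _, Finset.mem_univ _, hpq⟩, mem_SOT.mpr ⟨s1, s2, hV⟩⟩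

lemma im5b_witness [LinearOrder Y] {b1 b2 b3 : Y} {p q : X}
    (s1 : b1 < b2) (s2 : b2 < b3) (hV : ({b1, b2, b3} : Finset Y) ∈ BSet starT)
    (hpq : p ≠ q) :
    ({(q, b1), (p, b2), (q, b3)} : Finset (X × Y)) ∈ im5b starT := by
  refine Finset.mem_image.mpr ⟨((p, q), (b1, b2, b3)), ?_, rfl⟩
  exact Finset.mem_product.mpr ⟨Finset.mem_offDiag.mpr
    ⟨Finset.mem_univ _, Finset.mem_univ _, hpq⟩, mem_SOT.mpr ⟨s1, s2, hV⟩⟩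

lemma im5c_witness [LinearOrder Y] {b1 b2 b3 : Y} {p q : X}
    (s1 : b1 < b2) (s2 : b2 < b3) (hV : ({b1, b2, b3} : Finset Y) ∈ BSet starT)
    (hpq : p ≠ q) :
    ({(q, b1), (q, b2), (p, b3)} : Finset (X × Y)) ∈ im5c starT := by
  refine Finset.mem_image.mpr ⟨((p, q), (b1, b2, b3)), ?_, rfl⟩
  exact Finset.mem_product.mpr ⟨Finset.mem_offDiag.mpr
    ⟨Finset.mem_univ _, Finset.mem_univ _, hpq⟩, mem_SOT.mpr ⟨s1, s2, hV⟩⟩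

lemma mem_psi3 [LinearOrder X] {t1 t2 t3 : X} {r1 r2 r3 : Y}
    (d12 : t1 ≠ t2) (d13 : t1 ≠ t3) (d23 : t2 ≠ t3)
    (e12 : r1 ≠ r2) (e13 : r1 ≠ r3) (e23 : r2 ≠ r3)
    (hU : ({t1, t2, t3} : Finset X) ∈ BSet starS)
    (hV : ({r1, r2, r3} : Finset Y) ∈ BSet starT) :
    ({(t1, r1), (t2, r2), (t3, r3)} : Finset (X × Y)) ∈ im3 starS starT := by
  obtain ⟨u1, u2, u3, s1, s2, hset⟩ := exists_sorted3 d12 d13 d23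
  rcases triple_eq_cases s1.ne (s1.trans s2).ne s2.ne hset with
    H | H | H | H | H | H <;> obtain ⟨f1, f2, f3⟩ := H
  · rw [show ({(t1, r1), (t2, r2), (t3, r3)} : Finset (X × Y)) = {(u1, r1), (u2, r2), (u3, r3)} from by
      rw [f1, f2, f3]; try (ext z; simp); try tauto]
    exact im3_witness s1 s2 (by rw [hset]; exact hU) (by first | exact e12 | exact e13 | exact e23 | exact e12.symm | exact e13.symm | exact e23.symm) (by first | exact e12 | exact e13 | exact e23 | exact e12.symm | exact e13.symm | exact e23.symm) (by first | exact e12 | exact e13 | exact e23 | exact e12.symm | exact e13.symm | exact e23.symm)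
      (by rw [show ({r1,r2,r3} : Finset Y) = {r1, r2, r3} from by try (ext z; simp); try tauto]; exact hV)
  · rw [show ({(t1, r1), (t2, r2), (t3, r3)} : Finset (X × Y)) = {(u1, r1), (u2, r3), (u3, r2)} from by
      rw [f1, f2, f3]; try (ext z; simp); try tauto]
    exact im3_witness s1 s2 (by rw [hset]; exact hU) (by first | exact e12 | exact e13 | exact e23 | exact e12.symm | exact e13.symm | exact e23.symm) (by first | exact e12 | exact e13 | exact e23 | exact e12.symm | exact e13.symm | exact e23.symm) (by first | exact e12 | exact e13 | exact e23 | exact e12.symm | exact e13.symm | exact e23.symm)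
      (by rw [show ({r1,r3,r2} : Finset Y) = {r1, r2, r3} from by try (ext z; simp); try tauto]; exact hV)
  · rw [show ({(t1, r1), (t2, r2), (t3, r3)} : Finset (X × Y)) = {(u1, r2), (u2, r1), (u3, r3)} from by
      rw [f1, f2, f3]; try (ext z; simp); try tauto]
    exact im3_witness s1 s2 (by rw [hset]; exact hU) (by first | exact e12 | exact e13 | exact e23 | exact e12.symm | exact e13.symm | exact e23.symm) (by first | exact e12 | exact e13 | exact e23 | exact e12.symm | exact e13.symm | exact e23.symm) (by first | exact e12 | exact e13 | exact e23 | exact e12.symm | exact e13.symm | exact e23.symm)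
      (by rw [show ({r2,r1,r3} : Finset Y) = {r1, r2, r3} from by try (ext z; simp); try tauto]; exact hV)
  · rw [show ({(t1, r1), (t2, r2), (t3, r3)} : Finset (X × Y)) = {(u1, r2), (u2, r3), (u3, r1)} from by
      rw [f1, f2, f3]; try (ext z; simp); try tauto]
    exact im3_witness s1 s2 (by rw [hset]; exact hU) (by first | exact e12 | exact e13 | exact e23 | exact e12.symm | exact e13.symm | exact e23.symm) (by first | exact e12 | exact e13 | exact e23 | exact e12.symm | exact e13.symm | exact e23.symm) (by first | exact e12 | exact e13 | exact e23 | exact e12.symm | exact e13.symm | exact e23.symm)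
      (by rw [show ({r2,r3,r1} : Finset Y) = {r1, r2, r3} from by try (ext z; simp); try tauto]; exact hV)
  · rw [show ({(t1, r1), (t2, r2), (t3, r3)} : Finset (X × Y)) = {(u1, r3), (u2, r1), (u3, r2)} from by
      rw [f1, f2, f3]; try (ext z; simp); try tauto]
    exact im3_witness s1 s2 (by rw [hset]; exact hU) (by first | exact e12 | exact e13 | exact e23 | exact e12.symm | exact e13.symm | exact e23.symm) (by first | exact e12 | exact e13 | exact e23 | exact e12.symm | exact e13.symm | exact e23.symm) (by first | exact e12 | exact e13 | exact e23 | exact e12.symm | exact e13.symm | exact e23.symm)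
      (by rw [show ({r3,r1,r2} : Finset Y) = {r1, r2, r3} from by try (ext z; simp); try tauto]; exact hV)
  · rw [show ({(t1, r1), (t2, r2), (t3, r3)} : Finset (X × Y)) = {(u1, r3), (u2, r2), (u3, r1)} from by
      rw [f1, f2, f3]; try (ext z; simp); try tauto]
    exact im3_witness s1 s2 (by rw [hset]; exact hU) (by first | exact e12 | exact e13 | exact e23 | exact e12.symm | exact e13.symm | exact e23.symm) (by first | exact e12 | exact e13 | exact e23 | exact e12.symm | exact e13.symm | exact e23.symm) (by first | exact e12 | exact e13 | exact e23 | exact e12.symm | exact e13.symm | exact e23.symm)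
      (by rw [show ({r3,r2,r1} : Finset Y) = {r1, r2, r3} from by try (ext z; simp); try tauto]; exact hV)

lemma mem_psi4_union [LinearOrder X] {t1 t2 t3 : X} {x w : Y}
    (d12 : t1 ≠ t2) (d13 : t1 ≠ t3) (d23 : t2 ≠ t3) (hxw : x ≠ w)
    (hU : ({t1, t2, t3} : Finset X) ∈ BSet starS) :
    ({(t1, x), (t2, w), (t3, w)} : Finset (X × Y)) ∈ im4a starS ∨
      ({(t1, x), (t2, w), (t3, w)} : Finset (X × Y)) ∈ im4b starS ∨
      ({(t1, x), (t2, w), (t3, w)} : Finset (X × Y)) ∈ im4c starS := by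
  obtain ⟨u1, u2, u3, s1, s2, hset⟩ := exists_sorted3 d12 d13 d23
  rcases triple_eq_cases s1.ne (s1.trans s2).ne s2.ne hset with
    H | H | H | H | H | H <;> obtain ⟨f1, f2, f3⟩ := H
  · refine Or.inl ?_
    rw [show ({(t1, x), (t2, w), (t3, w)} : Finset (X × Y)) = {(u1, x), (u2, w), (u3, w)} from by
      rw [f1, f2, f3]; try (ext z; simp); try tauto]
    exact im4a_witness s1 s2 (by rw [hset]; exact hU) hxw
  · refine Or.inl ?_
    rw [show ({(t1, x), (t2, w), (t3, w)} : Finset (X × Y)) = {(u1, x), (u2, w), (u3, w)} from by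
      rw [f1, f2, f3]; try (ext z; simp); try tauto]
    exact im4a_witness s1 s2 (by rw [hset]; exact hU) hxw
  · refine Or.inr (Or.inl ?_)
    rw [show ({(t1, x), (t2, w), (t3, w)} : Finset (X × Y)) = {(u1, w), (u2, x), (u3, w)} from by
      rw [f1, f2, f3]; try (ext z; simp); try tauto]
    exact im4b_witness s1 s2 (by rw [hset]; exact hU) hxw
  · refine Or.inr (Or.inr ?_)
    rw [show ({(t1, x), (t2, w), (t3, w)} : Finset (X × Y)) = {(u1, w), (u2, w), (u3, x)} from by
      rw [f1, f2, f3]; try (ext z; simp); try tauto]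
    exact im4c_witness s1 s2 (by rw [hset]; exact hU) hxw
  · refine Or.inr (Or.inl ?_)
    rw [show ({(t1, x), (t2, w), (t3, w)} : Finset (X × Y)) = {(u1, w), (u2, x), (u3, w)} from by
      rw [f1, f2, f3]; try (ext z; simp); try tauto]
    exact im4b_witness s1 s2 (by rw [hset]; exact hU) hxw
  · refine Or.inr (Or.inr ?_)
    rw [show ({(t1, x), (t2, w), (t3, w)} : Finset (X × Y)) = {(u1, w), (u2, w), (u3, x)} from by
      rw [f1, f2, f3]; try (ext z; simp); try tauto]
    exact im4c_witness s1 s2 (by rw [hset]; exact hU) hxw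

lemma mem_psi5_union [LinearOrder Y] {r1 r2 r3 : Y} {p q : X}
    (e12 : r1 ≠ r2) (e13 : r1 ≠ r3) (e23 : r2 ≠ r3) (hpq : p ≠ q)
    (hV : ({r1, r2, r3} : Finset Y) ∈ BSet starT) :
    ({(p, r1), (q, r2), (q, r3)} : Finset (X × Y)) ∈ im5a starT ∨
      ({(p, r1), (q, r2), (q, r3)} : Finset (X × Y)) ∈ im5b starT ∨
      ({(p, r1), (q, r2), (q, r3)} : Finset (X × Y)) ∈ im5c starT := by
  obtain ⟨v1, v2, v3, s1, s2, hset⟩ := exists_sorted3 e12 e13 e23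
  rcases triple_eq_cases s1.ne (s1.trans s2).ne s2.ne hset with
    H | H | H | H | H | H <;> obtain ⟨f1, f2, f3⟩ := H
  · refine Or.inl ?_
    rw [show ({(p, r1), (q, r2), (q, r3)} : Finset (X × Y)) = {(p, v1), (q, v2), (q, v3)} from by
      rw [f1, f2, f3]; try (ext z; simp); try tauto]
    exact im5a_witness s1 s2 (by rw [hset]; exact hV) hpq
  · refine Or.inl ?_
    rw [show ({(p, r1), (q, r2), (q, r3)} : Finset (X × Y)) = {(p, v1), (q, v2), (q, v3)} from by
      rw [f1, f2, f3]; try (ext z; simp); try tauto]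
    exact im5a_witness s1 s2 (by rw [hset]; exact hV) hpq
  · refine Or.inr (Or.inl ?_)
    rw [show ({(p, r1), (q, r2), (q, r3)} : Finset (X × Y)) = {(q, v1), (p, v2), (q, v3)} from by
      rw [f1, f2, f3]; try (ext z; simp); try tauto]
    exact im5b_witness s1 s2 (by rw [hset]; exact hV) hpq
  · refine Or.inr (Or.inr ?_)
    rw [show ({(p, r1), (q, r2), (q, r3)} : Finset (X × Y)) = {(q, v1), (q, v2), (p, v3)} from by
      rw [f1, f2, f3]; try (ext z; simp); try tauto]
    exact im5c_witness s1 s2 (by rw [hset]; exact hV) hpq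
  · refine Or.inr (Or.inl ?_)
    rw [show ({(p, r1), (q, r2), (q, r3)} : Finset (X × Y)) = {(q, v1), (p, v2), (q, v3)} from by
      rw [f1, f2, f3]; try (ext z; simp); try tauto]
    exact im5b_witness s1 s2 (by rw [hset]; exact hV) hpq
  · refine Or.inr (Or.inr ?_)
    rw [show ({(p, r1), (q, r2), (q, r3)} : Finset (X × Y)) = {(q, v1), (q, v2), (p, v3)} from by
      rw [f1, f2, f3]; try (ext z; simp); try tauto]
    exact im5c_witness s1 s2 (by rw [hset]; exact hV) hpq

include hS hT in
lemma main_iff [LinearOrder X] [LinearOrder Y] (F : Finset (X × Y)) :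
    F ∈ BSet (pstar starS starT) ↔
      F ∈ im1 starT ∨ F ∈ im2 starS ∨ F ∈ im3 starS starT ∨
      F ∈ im4a starS ∨ F ∈ im4b starS ∨ F ∈ im4c starS ∨
      F ∈ im5a starT ∨ F ∈ im5b starT ∨ F ∈ im5c starT ∨
      F ∈ (im6 : Finset (Finset (X × Y))) := by
  constructor
  · rintro ⟨⟨a, x⟩, ⟨b, y⟩, ⟨c, z⟩, h12, h13, h23, rfl⟩
    simp only [pstar]
    rcases eq_or_ne a b with hab | hab
    · rcases eq_or_ne a c with hac | hac
      · -- a = b = c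
        subst hab; subst hac
        have dxy : x ≠ y := fun h => h12 (by rw [h])
        have dxz : x ≠ z := fun h => h13 (by rw [h])
        have dyz : y ≠ z := fun h => h23 (by rw [h])
        rw [hS.1 a]
        have := mem_psi1 (a := a) (mem_BSet_of hT dxy dxz dyz)
        exact Or.inl this
      · rcases eq_or_ne b c with hbc | hbc
        · exact absurd (hab.trans hbc) hac
        · -- a = b ≠ c
          subst hab
          have dxy : x ≠ y := fun h => h12 (by rw [h])
          rw [hS.1 a, hS.2.1 c a]
          rcases eq_or_ne y z with hyz | hyz
          · -- y = z
            subst hyz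
            rw [hT.1 y, hT.2.1 y x]
            rw [show ({(a, starT x y), (starS a c, y), (starS a c, starT x y)} :
                Finset (X × Y)) =
              {(starS a c, y), (starS a c, starT x y), (a, starT x y)} from by
                ext r; simp; tauto]
            have := mem_psi6 (X := X) (Y := Y)
              (star_ne_left hS hac) ((star_ne_right hT dxy).symm)
            exact Or.inr (Or.inr (Or.inr (Or.inr (Or.inr (Or.inr (Or.inr (Or.inr (Or.inr this))))))))
          · rcases eq_or_ne x z with hxz | hxz
            · -- x = z
              subst hxz
              rw [hT.1 x, hT.2.1 y x]
              rw [show ({(a, starT x y), (starS a c, starT x y), (starS a c, x)} :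
                  Finset (X × Y)) =
                {(starS a c, x), (starS a c, starT x y), (a, starT x y)} from by
                  ext r; simp; tauto]
              have := mem_psi6 (X := X) (Y := Y)
                (star_ne_left hS hac) ((star_ne_left hT dxy).symm)
              exact Or.inr (Or.inr (Or.inr (Or.inr (Or.inr (Or.inr (Or.inr (Or.inr (Or.inr this))))))))
            · -- x, y, z pairwise distinct
              have := mem_psi5_union (q := starS a c)
                (tri12 hT hxz) (tri13 hT hyz) (tri23 hT dxy)
                ((star_ne_left hS hac).symm) (mem_BSet_of hT dxy hxz hyz)
              rcases this with h | h | h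
              exacts [Or.inr (Or.inr (Or.inr (Or.inr (Or.inr (Or.inr (Or.inl h)))))),
                Or.inr (Or.inr (Or.inr (Or.inr (Or.inr (Or.inr (Or.inr (Or.inl h))))))),
                Or.inr (Or.inr (Or.inr (Or.inr (Or.inr (Or.inr (Or.inr (Or.inr (Or.inl h))))))))]
    · rcases eq_or_ne a c with hac | hac
      · -- a = c ≠ b
        subst hac
        have dxz : x ≠ z := fun h => h13 (by rw [h])
        rw [hS.1 a, hS.2.1 b a]
        rcases eq_or_ne x y with hxy | hxy
        · -- x = y
          subst hxy
          rw [hT.1 x, hT.2.1 z x]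
          have := mem_psi6 (X := X) (Y := Y)
            (star_ne_left hS hab) ((star_ne_left hT dxz).symm)
          exact Or.inr (Or.inr (Or.inr (Or.inr (Or.inr (Or.inr (Or.inr (Or.inr (Or.inr this))))))))
        · rcases eq_or_ne y z with hyz | hyz
          · -- y = z
            subst hyz
            rw [hT.1 y, hT.2.1 y x]
            rw [show ({(starS a b, starT x y), (starS a b, y), (a, starT x y)} :
                Finset (X × Y)) =
              {(starS a b, y), (starS a b, starT x y), (a, starT x y)} from by
                ext r; simp; tauto]
            have := mem_psi6 (X := X) (Y := Y)
              (star_ne_left hS hab) ((star_ne_right hT hxy).symm)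
            exact Or.inr (Or.inr (Or.inr (Or.inr (Or.inr (Or.inr (Or.inr (Or.inr (Or.inr this))))))))
          · -- x, y, z distinct
            rw [show ({(starS a b, starT x y), (starS a b, starT y z), (a, starT z x)} :
                Finset (X × Y)) =
              {(a, starT z x), (starS a b, starT x y), (starS a b, starT y z)} from by
                ext r; simp; tauto]
            have hVp : ({starT z x, starT x y, starT y z} : Finset Y) ∈ BSet starT := by
              rw [show ({starT z x, starT x y, starT y z} : Finset Y) =
                  {starT x y, starT y z, starT z x} from by ext r; simp; tauto]
              exact mem_BSet_of hT hxy dxz hyz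
            have := mem_psi5_union (q := starS a b)
              ((tri13 hT hyz).symm) ((tri23 hT hxy).symm) (tri12 hT dxz)
              ((star_ne_left hS hab).symm) hVp
            rcases this with h | h | h
            exacts [Or.inr (Or.inr (Or.inr (Or.inr (Or.inr (Or.inr (Or.inl h)))))),
              Or.inr (Or.inr (Or.inr (Or.inr (Or.inr (Or.inr (Or.inr (Or.inl h))))))),
              Or.inr (Or.inr (Or.inr (Or.inr (Or.inr (Or.inr (Or.inr (Or.inr (Or.inl h))))))))]
      · rcases eq_or_ne b c with hbc | hbc
        · -- b = c ≠ a
          subst hbc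
          have dyz : y ≠ z := fun h => h23 (by rw [h])
          rw [hS.1 b, hS.2.1 b a]
          rcases eq_or_ne x y with hxy | hxy
          · -- x = y
            subst hxy
            have dxz : x ≠ z := dyz
            rw [hT.1 x, hT.2.1 z x]
            rw [show ({(starS a b, x), (b, starT x z), (starS a b, starT x z)} :
                Finset (X × Y)) =
              {(starS a b, x), (starS a b, starT x z), (b, starT x z)} from by
                ext r; simp; tauto]
            have := mem_psi6 (X := X) (Y := Y)
              (star_ne_right hS hab) ((star_ne_left hT dxz).symm)
            exact Or.inr (Or.inr (Or.inr (Or.inr (Or.inr (Or.inr (Or.inr (Or.inr (Or.inr this))))))))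
          · rcases eq_or_ne x z with hxz | hxz
            · -- x = z
              subst hxz
              have dxy : x ≠ y := dyz.symm
              rw [hT.1 x, hT.2.1 y x]
              rw [show ({(starS a b, starT x y), (b, starT x y), (starS a b, x)} :
                  Finset (X × Y)) =
                {(starS a b, x), (starS a b, starT x y), (b, starT x y)} from by
                  ext r; simp; tauto]
              have := mem_psi6 (X := X) (Y := Y)
                (star_ne_right hS hab) ((star_ne_left hT dxy).symm)
              exact Or.inr (Or.inr (Or.inr (Or.inr (Or.inr (Or.inr (Or.inr (Or.inr (Or.inr this))))))))
            · -- x, y, z distinct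
              rw [show ({(starS a b, starT x y), (b, starT y z), (starS a b, starT z x)} :
                  Finset (X × Y)) =
                {(b, starT y z), (starS a b, starT x y), (starS a b, starT z x)} from by
                  ext r; simp; tauto]
              have hVp : ({starT y z, starT x y, starT z x} : Finset Y) ∈ BSet starT := by
                rw [show ({starT y z, starT x y, starT z x} : Finset Y) =
                    {starT x y, starT y z, starT z x} from by ext r; simp; tauto]
                exact mem_BSet_of hT hxy hxz dyz
              have := mem_psi5_union (q := starS a b)
                ((tri12 hT hxz).symm) (tri23 hT hxy) (tri13 hT dyz)
                ((star_ne_right hS hab).symm) hVp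
              rcases this with h | h | h
              exacts [Or.inr (Or.inr (Or.inr (Or.inr (Or.inr (Or.inr (Or.inl h)))))),
                Or.inr (Or.inr (Or.inr (Or.inr (Or.inr (Or.inr (Or.inr (Or.inl h))))))),
                Or.inr (Or.inr (Or.inr (Or.inr (Or.inr (Or.inr (Or.inr (Or.inr (Or.inl h))))))))]
        · -- a, b, c pairwise distinct
          have dT12 : starS a b ≠ starS b c := tri12 hS hac
          have dT13 : starS a b ≠ starS c a := tri13 hS hbc
          have dT23 : starS b c ≠ starS c a := tri23 hS hab
          have hU := mem_BSet_of hS hab hac hbc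
          rcases eq_or_ne x y with hxy | hxy
          · subst hxy
            rcases eq_or_ne x z with hxz | hxz
            · -- x = y = z
              subst hxz
              rw [hT.1 x]
              have := mem_psi2 (x := x) hU
              exact Or.inr (Or.inl this)
            · -- x = y ≠ z
              rw [hT.1 x, hT.2.1 z x]
              have := mem_psi4_union dT12 dT13 dT23
                ((star_ne_left hT hxz).symm) hU
              rcases this with h | h | h
              exacts [Or.inr (Or.inr (Or.inr (Or.inl h))),
                Or.inr (Or.inr (Or.inr (Or.inr (Or.inl h)))),
                Or.inr (Or.inr (Or.inr (Or.inr (Or.inr (Or.inl h)))))]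
          · rcases eq_or_ne y z with hyz | hyz
            · -- y = z ≠ x
              subst hyz
              rw [hT.1 y, hT.2.1 y x]
              rw [show ({(starS a b, starT x y), (starS b c, y), (starS c a, starT x y)} :
                  Finset (X × Y)) =
                {(starS b c, y), (starS a b, starT x y), (starS c a, starT x y)} from by
                  ext r; simp; tauto]
              have hUp : ({starS b c, starS a b, starS c a} : Finset X) ∈ BSet starS := by
                rw [show ({starS b c, starS a b, starS c a} : Finset X) =
                    {starS a b, starS b c, starS c a} from by ext r; simp; tauto]
                exact hU
              have := mem_psi4_union dT12.symm dT23 dT13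
                ((star_ne_right hT hxy).symm) hUp
              rcases this with h | h | h
              exacts [Or.inr (Or.inr (Or.inr (Or.inl h))),
                Or.inr (Or.inr (Or.inr (Or.inr (Or.inl h)))),
                Or.inr (Or.inr (Or.inr (Or.inr (Or.inr (Or.inl h)))))]
            · rcases eq_or_ne x z with hxz | hxz
              · -- x = z ≠ y
                subst hxz
                rw [hT.1 x, hT.2.1 y x]
                rw [show ({(starS a b, starT x y), (starS b c, starT x y), (starS c a, x)} :
                    Finset (X × Y)) =
                  {(starS c a, x), (starS a b, starT x y), (starS b c, starT x y)} from by
                    ext r; simp; tauto]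
                have hUp : ({starS c a, starS a b, starS b c} : Finset X) ∈ BSet starS := by
                  rw [show ({starS c a, starS a b, starS b c} : Finset X) =
                      {starS a b, starS b c, starS c a} from by ext r; simp; tauto]
                  exact hU
                have := mem_psi4_union dT13.symm dT23.symm dT12
                  ((star_ne_left hT hxy).symm) hUp
                rcases this with h | h | h
                exacts [Or.inr (Or.inr (Or.inr (Or.inl h))),
                  Or.inr (Or.inr (Or.inr (Or.inr (Or.inl h)))),
                  Or.inr (Or.inr (Or.inr (Or.inr (Or.inr (Or.inl h)))))]
              · -- all distinct
                have := mem_psi3 (starS := starS) (starT := starT) dT12 dT13 dT23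
                  (tri12 hT hxz) (tri13 hT hyz) (tri23 hT hxy) hU
                  (mem_BSet_of hT hxy hxz hyz)
                exact Or.inr (Or.inr (Or.inl this))
  · intro h
    rcases h with h | h | h | h | h | h | h | h | h | h
    · obtain ⟨⟨a, t⟩, hdom, rfl⟩ := Finset.mem_image.mp h
      obtain ⟨p, q, r, d12, d13, d23, rfl⟩ := mem_BF.mp (Finset.mem_product.mp hdom).2
      rw [show (({starT p q, starT q r, starT r p} : Finset Y).image fun v => (a, v)) =
        {(a, starT p q), (a, starT q r), (a, starT r p)} from by simp]
      exact real1 hS hT a d12 d13 d23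
    · obtain ⟨⟨s, v⟩, hdom, rfl⟩ := Finset.mem_image.mp h
      obtain ⟨p, q, r, d12, d13, d23, rfl⟩ := mem_BF.mp (Finset.mem_product.mp hdom).1
      rw [show (({starS p q, starS q r, starS r p} : Finset X).image fun u => (u, v)) =
        {(starS p q, v), (starS q r, v), (starS r p, v)} from by simp]
      exact real2 hS hT v d12 d13 d23
    · obtain ⟨⟨⟨u1, u2, u3⟩, ⟨v1, v2, v3⟩⟩, hdom, rfl⟩ := Finset.mem_image.mp h
      obtain ⟨hU, hV⟩ := Finset.mem_product.mp hdom
      obtain ⟨s1, s2, hBU⟩ := mem_SOS.mp hU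
      obtain ⟨e1, e2, e3, hBV⟩ := mem_OT.mp hV
      exact real3 hS hT s1.ne (s1.trans s2).ne s2.ne e1 e2 e3 hBU hBV
    · obtain ⟨⟨⟨u1, u2, u3⟩, ⟨xx, ww⟩⟩, hdom, rfl⟩ := Finset.mem_image.mp h
      obtain ⟨hU, hV⟩ := Finset.mem_product.mp hdom
      obtain ⟨s1, s2, hBU⟩ := mem_SOS.mp hU
      have hxw : xx ≠ ww := (Finset.mem_offDiag.mp hV).2.2
      exact real4 hS hT s1.ne (s1.trans s2).ne s2.ne hxw hBU
    · obtain ⟨⟨⟨u1, u2, u3⟩, ⟨xx, ww⟩⟩, hdom, rfl⟩ := Finset.mem_image.mp h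
      obtain ⟨hU, hV⟩ := Finset.mem_product.mp hdom
      obtain ⟨s1, s2, hBU⟩ := mem_SOS.mp hU
      have hxw : xx ≠ ww := (Finset.mem_offDiag.mp hV).2.2
      clear hdom h hU hV
      show ({(u1, ww), (u2, xx), (u3, ww)} : Finset (X × Y)) ∈ BSet (pstar starS starT)
      rw [show ({(u1, ww), (u2, xx), (u3, ww)} : Finset (X × Y)) =
        {(u2, xx), (u1, ww), (u3, ww)} from by ext r; simp; tauto]
      refine real4 hS hT s1.ne.symm s2.ne (s1.trans s2).ne hxw ?_
      rw [show ({u2, u1, u3} : Finset X) = {u1, u2, u3} from by ext r; simp; tauto]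
      exact hBU
    · obtain ⟨⟨⟨u1, u2, u3⟩, ⟨xx, ww⟩⟩, hdom, rfl⟩ := Finset.mem_image.mp h
      obtain ⟨hU, hV⟩ := Finset.mem_product.mp hdom
      obtain ⟨s1, s2, hBU⟩ := mem_SOS.mp hU
      have hxw : xx ≠ ww := (Finset.mem_offDiag.mp hV).2.2
      clear hdom h hU hV
      show ({(u1, ww), (u2, ww), (u3, xx)} : Finset (X × Y)) ∈ BSet (pstar starS starT)
      rw [show ({(u1, ww), (u2, ww), (u3, xx)} : Finset (X × Y)) =
        {(u3, xx), (u1, ww), (u2, ww)} from by ext r; simp; tauto]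
      refine real4 hS hT (s1.trans s2).ne.symm s2.ne.symm s1.ne hxw ?_
      rw [show ({u3, u1, u2} : Finset X) = {u1, u2, u3} from by ext r; simp; tauto]
      exact hBU
    · obtain ⟨⟨⟨p, q⟩, ⟨v1, v2, v3⟩⟩, hdom, rfl⟩ := Finset.mem_image.mp h
      obtain ⟨hU, hV⟩ := Finset.mem_product.mp hdom
      obtain ⟨s1, s2, hBV⟩ := mem_SOT.mp hV
      have hpq : p ≠ q := (Finset.mem_offDiag.mp hU).2.2
      exact real5 hS hT s1.ne (s1.trans s2).ne s2.ne hpq hBV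
    · obtain ⟨⟨⟨p, q⟩, ⟨v1, v2, v3⟩⟩, hdom, rfl⟩ := Finset.mem_image.mp h
      obtain ⟨hU, hV⟩ := Finset.mem_product.mp hdom
      obtain ⟨s1, s2, hBV⟩ := mem_SOT.mp hV
      have hpq : p ≠ q := (Finset.mem_offDiag.mp hU).2.2
      clear hdom h hU hV
      show ({(q, v1), (p, v2), (q, v3)} : Finset (X × Y)) ∈ BSet (pstar starS starT)
      rw [show ({(q, v1), (p, v2), (q, v3)} : Finset (X × Y)) =
        {(p, v2), (q, v1), (q, v3)} from by ext r; simp; tauto]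
      refine real5 hS hT s1.ne.symm s2.ne (s1.trans s2).ne hpq ?_
      rw [show ({v2, v1, v3} : Finset Y) = {v1, v2, v3} from by ext r; simp; tauto]
      exact hBV
    · obtain ⟨⟨⟨p, q⟩, ⟨v1, v2, v3⟩⟩, hdom, rfl⟩ := Finset.mem_image.mp h
      obtain ⟨hU, hV⟩ := Finset.mem_product.mp hdom
      obtain ⟨s1, s2, hBV⟩ := mem_SOT.mp hV
      have hpq : p ≠ q := (Finset.mem_offDiag.mp hU).2.2
      clear hdom h hU hV
      show ({(q, v1), (q, v2), (p, v3)} : Finset (X × Y)) ∈ BSet (pstar starS starT)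
      rw [show ({(q, v1), (q, v2), (p, v3)} : Finset (X × Y)) =
        {(p, v3), (q, v1), (q, v2)} from by ext r; simp; tauto]
      refine real5 hS hT (s1.trans s2).ne.symm s2.ne.symm s1.ne hpq ?_
      rw [show ({v3, v1, v2} : Finset Y) = {v1, v2, v3} from by ext r; simp; tauto]
      exact hBV
    · obtain ⟨⟨⟨u, u'⟩, ⟨v, v'⟩⟩, hdom, rfl⟩ := Finset.mem_image.mp h
      obtain ⟨hU, hV⟩ := Finset.mem_product.mp hdom
      exact real6 hS hT (Finset.mem_offDiag.mp hU).2.2 (Finset.mem_offDiag.mp hV).2.2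

include hS in
lemma disj_im4ab [LinearOrder X] :
    Disjoint (im4a starS (Y := Y)) (im4b starS) := by
  rw [Finset.disjoint_left]
  intro F hFa hFb
  obtain ⟨⟨⟨u1, u2, u3⟩, ⟨x, w⟩⟩, hdom, rfl⟩ := Finset.mem_image.mp hFa
  obtain ⟨⟨⟨w1, w2, w3⟩, ⟨x', w'⟩⟩, hdom', e⟩ := Finset.mem_image.mp hFb
  obtain ⟨s1, s2, -⟩ := mem_SOS.mp (Finset.mem_product.mp hdom).1
  obtain ⟨t1, t2, -⟩ := mem_SOS.mp (Finset.mem_product.mp hdom').1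
  have hxw : x ≠ w := (Finset.mem_offDiag.mp (Finset.mem_product.mp hdom).2).2.2
  have e' : ({(w1, w'), (w2, x'), (w3, w')} : Finset (X × Y)) =
    {(u1, x), (u2, w), (u3, w)} := e
  have efst := congrArg (Finset.image Prod.fst) e'
  rw [img_fst3, img_fst3] at efst
  obtain ⟨e1, e2, e3⟩ := sorted3_unique s1 s2 t1 t2 efst.symm
  simp only at e1 e2 e3
  subst e1; subst e2; subst e3
  have d12 : u1 ≠ u2 := s1.ne
  have d13 : u1 ≠ u3 := (s1.trans s2).ne
  have d23 : u2 ≠ u3 := s2.ne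
  have mA : ((u1, x) : X × Y) ∈ ({(u1, w'), (u2, x'), (u3, w')} : Finset (X × Y)) := by
    rw [e']; simp
  have mk : ((u3, w) : X × Y) ∈ ({(u1, w'), (u2, x'), (u3, w')} : Finset (X × Y)) := by
    rw [e']; simp
  simp only [mem3, Prod.ext_iff] at mA mk
  have f1 : x = w' := by
    rcases mA with ⟨-, f⟩ | ⟨h, -⟩ | ⟨h, -⟩
    exacts [f, absurd h d12, absurd h d13]
  have f2 : w = w' := by
    rcases mk with ⟨h, -⟩ | ⟨h, -⟩ | ⟨-, f⟩
    exacts [absurd h d13.symm, absurd h d23.symm, f]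
  exact hxw (f1.trans f2.symm)

include hS in
lemma disj_im4ac [LinearOrder X] :
    Disjoint (im4a starS (Y := Y)) (im4c starS) := by
  rw [Finset.disjoint_left]
  intro F hFa hFb
  obtain ⟨⟨⟨u1, u2, u3⟩, ⟨x, w⟩⟩, hdom, rfl⟩ := Finset.mem_image.mp hFa
  obtain ⟨⟨⟨w1, w2, w3⟩, ⟨x', w'⟩⟩, hdom', e⟩ := Finset.mem_image.mp hFb
  obtain ⟨s1, s2, -⟩ := mem_SOS.mp (Finset.mem_product.mp hdom).1
  obtain ⟨t1, t2, -⟩ := mem_SOS.mp (Finset.mem_product.mp hdom').1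
  have hxw : x ≠ w := (Finset.mem_offDiag.mp (Finset.mem_product.mp hdom).2).2.2
  have e' : ({(w1, w'), (w2, w'), (w3, x')} : Finset (X × Y)) =
    {(u1, x), (u2, w), (u3, w)} := e
  have efst := congrArg (Finset.image Prod.fst) e'
  rw [img_fst3, img_fst3] at efst
  obtain ⟨e1, e2, e3⟩ := sorted3_unique s1 s2 t1 t2 efst.symm
  simp only at e1 e2 e3
  subst e1; subst e2; subst e3
  have d12 : u1 ≠ u2 := s1.ne
  have d13 : u1 ≠ u3 := (s1.trans s2).ne
  have d23 : u2 ≠ u3 := s2.ne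
  have mA : ((u1, x) : X × Y) ∈ ({(u1, w'), (u2, w'), (u3, x')} : Finset (X × Y)) := by
    rw [e']; simp
  have mk : ((u2, w) : X × Y) ∈ ({(u1, w'), (u2, w'), (u3, x')} : Finset (X × Y)) := by
    rw [e']; simp
  simp only [mem3, Prod.ext_iff] at mA mk
  have f1 : x = w' := by
    rcases mA with ⟨-, f⟩ | ⟨h, -⟩ | ⟨h, -⟩
    exacts [f, absurd h d12, absurd h d13]
  have f2 : w = w' := by
    rcases mk with ⟨h, -⟩ | ⟨-, f⟩ | ⟨h, -⟩
    exacts [absurd h d12.symm, f, absurd h d23]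
  exact hxw (f1.trans f2.symm)

include hS in
lemma disj_im4bc [LinearOrder X] :
    Disjoint (im4b starS (Y := Y)) (im4c starS) := by
  rw [Finset.disjoint_left]
  intro F hFa hFb
  obtain ⟨⟨⟨u1, u2, u3⟩, ⟨x, w⟩⟩, hdom, rfl⟩ := Finset.mem_image.mp hFa
  obtain ⟨⟨⟨w1, w2, w3⟩, ⟨x', w'⟩⟩, hdom', e⟩ := Finset.mem_image.mp hFb
  obtain ⟨s1, s2, -⟩ := mem_SOS.mp (Finset.mem_product.mp hdom).1
  obtain ⟨t1, t2, -⟩ := mem_SOS.mp (Finset.mem_product.mp hdom').1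
  have hxw : x ≠ w := (Finset.mem_offDiag.mp (Finset.mem_product.mp hdom).2).2.2
  have e' : ({(w1, w'), (w2, w'), (w3, x')} : Finset (X × Y)) =
    {(u1, w), (u2, x), (u3, w)} := e
  have efst := congrArg (Finset.image Prod.fst) e'
  rw [img_fst3, img_fst3] at efst
  obtain ⟨e1, e2, e3⟩ := sorted3_unique s1 s2 t1 t2 efst.symm
  simp only at e1 e2 e3
  subst e1; subst e2; subst e3
  have d12 : u1 ≠ u2 := s1.ne
  have d13 : u1 ≠ u3 := (s1.trans s2).ne
  have d23 : u2 ≠ u3 := s2.ne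
  have mA : ((u2, x) : X × Y) ∈ ({(u1, w'), (u2, w'), (u3, x')} : Finset (X × Y)) := by
    rw [e']; simp
  have mk : ((u1, w) : X × Y) ∈ ({(u1, w'), (u2, w'), (u3, x')} : Finset (X × Y)) := by
    rw [e']; simp
  simp only [mem3, Prod.ext_iff] at mA mk
  have f1 : x = w' := by
    rcases mA with ⟨h, -⟩ | ⟨-, f⟩ | ⟨h, -⟩
    exacts [absurd h d12.symm, f, absurd h d23]
  have f2 : w = w' := by
    rcases mk with ⟨-, f⟩ | ⟨h, -⟩ | ⟨h, -⟩
    exacts [f, absurd h d12, absurd h d13]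
  exact hxw (f1.trans f2.symm)

include hT in
lemma disj_im5ab [LinearOrder Y] :
    Disjoint (im5a starT (X := X)) (im5b starT) := by
  rw [Finset.disjoint_left]
  intro F hFa hFb
  obtain ⟨⟨⟨p, q⟩, ⟨v1, v2, v3⟩⟩, hdom, rfl⟩ := Finset.mem_image.mp hFa
  obtain ⟨⟨⟨p', q'⟩, ⟨r1, r2, r3⟩⟩, hdom', e⟩ := Finset.mem_image.mp hFb
  obtain ⟨s1, s2, -⟩ := mem_SOT.mp (Finset.mem_product.mp hdom).2
  obtain ⟨t1, t2, -⟩ := mem_SOT.mp (Finset.mem_product.mp hdom').2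
  have hpq : p ≠ q := (Finset.mem_offDiag.mp (Finset.mem_product.mp hdom).1).2.2
  have e' : ({(q', r1), (p', r2), (q', r3)} : Finset (X × Y)) =
    {(p, v1), (q, v2), (q, v3)} := e
  have esnd := congrArg (Finset.image Prod.snd) e'
  rw [img_snd3, img_snd3] at esnd
  obtain ⟨e1, e2, e3⟩ := sorted3_unique s1 s2 t1 t2 esnd.symm
  simp only at e1 e2 e3
  subst e1; subst e2; subst e3
  have d12 : v1 ≠ v2 := s1.ne
  have d13 : v1 ≠ v3 := (s1.trans s2).ne
  have d23 : v2 ≠ v3 := s2.ne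
  have mA : ((p, v1) : X × Y) ∈ ({(q', v1), (p', v2), (q', v3)} : Finset (X × Y)) := by
    rw [e']; simp
  have mk : ((q, v3) : X × Y) ∈ ({(q', v1), (p', v2), (q', v3)} : Finset (X × Y)) := by
    rw [e']; simp
  simp only [mem3, Prod.ext_iff] at mA mk
  have f1 : p = q' := by
    rcases mA with ⟨f, -⟩ | ⟨-, h⟩ | ⟨-, h⟩
    exacts [f, absurd h d12, absurd h d13]
  have f2 : q = q' := by
    rcases mk with ⟨-, h⟩ | ⟨-, h⟩ | ⟨f, -⟩
    exacts [absurd h d13.symm, absurd h d23.symm, f]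
  exact hpq (f1.trans f2.symm)

include hT in
lemma disj_im5ac [LinearOrder Y] :
    Disjoint (im5a starT (X := X)) (im5c starT) := by
  rw [Finset.disjoint_left]
  intro F hFa hFb
  obtain ⟨⟨⟨p, q⟩, ⟨v1, v2, v3⟩⟩, hdom, rfl⟩ := Finset.mem_image.mp hFa
  obtain ⟨⟨⟨p', q'⟩, ⟨r1, r2, r3⟩⟩, hdom', e⟩ := Finset.mem_image.mp hFb
  obtain ⟨s1, s2, -⟩ := mem_SOT.mp (Finset.mem_product.mp hdom).2
  obtain ⟨t1, t2, -⟩ := mem_SOT.mp (Finset.mem_product.mp hdom').2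
  have hpq : p ≠ q := (Finset.mem_offDiag.mp (Finset.mem_product.mp hdom).1).2.2
  have e' : ({(q', r1), (q', r2), (p', r3)} : Finset (X × Y)) =
    {(p, v1), (q, v2), (q, v3)} := e
  have esnd := congrArg (Finset.image Prod.snd) e'
  rw [img_snd3, img_snd3] at esnd
  obtain ⟨e1, e2, e3⟩ := sorted3_unique s1 s2 t1 t2 esnd.symm
  simp only at e1 e2 e3
  subst e1; subst e2; subst e3
  have d12 : v1 ≠ v2 := s1.ne
  have d13 : v1 ≠ v3 := (s1.trans s2).ne
  have d23 : v2 ≠ v3 := s2.ne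
  have mA : ((p, v1) : X × Y) ∈ ({(q', v1), (q', v2), (p', v3)} : Finset (X × Y)) := by
    rw [e']; simp
  have mk : ((q, v2) : X × Y) ∈ ({(q', v1), (q', v2), (p', v3)} : Finset (X × Y)) := by
    rw [e']; simp
  simp only [mem3, Prod.ext_iff] at mA mk
  have f1 : p = q' := by
    rcases mA with ⟨f, -⟩ | ⟨-, h⟩ | ⟨-, h⟩
    exacts [f, absurd h d12, absurd h d13]
  have f2 : q = q' := by
    rcases mk with ⟨-, h⟩ | ⟨f, -⟩ | ⟨-, h⟩
    exacts [absurd h d12.symm, f, absurd h d23]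
  exact hpq (f1.trans f2.symm)

include hT in
lemma disj_im5bc [LinearOrder Y] :
    Disjoint (im5b starT (X := X)) (im5c starT) := by
  rw [Finset.disjoint_left]
  intro F hFa hFb
  obtain ⟨⟨⟨p, q⟩, ⟨v1, v2, v3⟩⟩, hdom, rfl⟩ := Finset.mem_image.mp hFa
  obtain ⟨⟨⟨p', q'⟩, ⟨r1, r2, r3⟩⟩, hdom', e⟩ := Finset.mem_image.mp hFb
  obtain ⟨s1, s2, -⟩ := mem_SOT.mp (Finset.mem_product.mp hdom).2
  obtain ⟨t1, t2, -⟩ := mem_SOT.mp (Finset.mem_product.mp hdom').2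
  have hpq : p ≠ q := (Finset.mem_offDiag.mp (Finset.mem_product.mp hdom).1).2.2
  have e' : ({(q', r1), (q', r2), (p', r3)} : Finset (X × Y)) =
    {(q, v1), (p, v2), (q, v3)} := e
  have esnd := congrArg (Finset.image Prod.snd) e'
  rw [img_snd3, img_snd3] at esnd
  obtain ⟨e1, e2, e3⟩ := sorted3_unique s1 s2 t1 t2 esnd.symm
  simp only at e1 e2 e3
  subst e1; subst e2; subst e3
  have d12 : v1 ≠ v2 := s1.ne
  have d13 : v1 ≠ v3 := (s1.trans s2).ne
  have d23 : v2 ≠ v3 := s2.ne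
  have mA : ((p, v2) : X × Y) ∈ ({(q', v1), (q', v2), (p', v3)} : Finset (X × Y)) := by
    rw [e']; simp
  have mk : ((q, v1) : X × Y) ∈ ({(q', v1), (q', v2), (p', v3)} : Finset (X × Y)) := by
    rw [e']; simp
  simp only [mem3, Prod.ext_iff] at mA mk
  have f1 : p = q' := by
    rcases mA with ⟨-, h⟩ | ⟨f, -⟩ | ⟨-, h⟩
    exacts [absurd h d12.symm, f, absurd h d23]
  have f2 : q = q' := by
    rcases mk with ⟨f, -⟩ | ⟨-, h⟩ | ⟨-, h⟩
    exacts [f, absurd h d12, absurd h d13]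
  exact hpq (f1.trans f2.symm)

include hS hT in
lemma final_count [LinearOrder X] [LinearOrder Y] :
    betaInv (pstar starS starT) =
      Fintype.card X * betaInv starT + Fintype.card Y * betaInv starS
        + betaInv starS * (6 * betaInv starT)
        + betaInv starS * (Fintype.card Y * Fintype.card Y - Fintype.card Y)
        + betaInv starS * (Fintype.card Y * Fintype.card Y - Fintype.card Y)
        + betaInv starS * (Fintype.card Y * Fintype.card Y - Fintype.card Y)
        + (Fintype.card X * Fintype.card X - Fintype.card X) * betaInv starT
        + (Fintype.card X * Fintype.card X - Fintype.card X) * betaInv starT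
        + (Fintype.card X * Fintype.card X - Fintype.card X) * betaInv starT
        + (Fintype.card X * Fintype.card X - Fintype.card X) *
            (Fintype.card Y * Fintype.card Y - Fintype.card Y) := by
  have key : BF (pstar starS starT) =
      ((((((((im1 starT ∪ im2 starS) ∪ im3 starS starT) ∪ im4a starS) ∪ im4b starS) ∪
        im4c starS) ∪ im5a starT) ∪ im5b starT) ∪ im5c starT) ∪ im6 := by
    ext F
    rw [mem_BF, main_iff hS hT F]
    simp only [Finset.mem_union, or_assoc]
  have q1 : ∀ F ∈ im1 starT (X := X),
      ((F.image Prod.fst).card, (F.image Prod.snd).card) = ((1 : ℕ), (3 : ℕ)) :=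
    fun F hF => by obtain ⟨h1, h2⟩ := pat_im1 hT hF; rw [h1, h2]
  have q2 : ∀ F ∈ im2 starS (Y := Y),
      ((F.image Prod.fst).card, (F.image Prod.snd).card) = ((3 : ℕ), (1 : ℕ)) :=
    fun F hF => by obtain ⟨h1, h2⟩ := pat_im2 hS hF; rw [h1, h2]
  have q3 : ∀ F ∈ im3 starS starT,
      ((F.image Prod.fst).card, (F.image Prod.snd).card) = ((3 : ℕ), (3 : ℕ)) :=
    fun F hF => by obtain ⟨h1, h2⟩ := pat_im3 hF; rw [h1, h2]
  have q4a : ∀ F ∈ im4a starS (Y := Y),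
      ((F.image Prod.fst).card, (F.image Prod.snd).card) = ((3 : ℕ), (2 : ℕ)) :=
    fun F hF => by obtain ⟨h1, h2⟩ := pat_im4a hF; rw [h1, h2]
  have q4b : ∀ F ∈ im4b starS (Y := Y),
      ((F.image Prod.fst).card, (F.image Prod.snd).card) = ((3 : ℕ), (2 : ℕ)) :=
    fun F hF => by obtain ⟨h1, h2⟩ := pat_im4b hF; rw [h1, h2]
  have q4c : ∀ F ∈ im4c starS (Y := Y),
      ((F.image Prod.fst).card, (F.image Prod.snd).card) = ((3 : ℕ), (2 : ℕ)) :=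
    fun F hF => by obtain ⟨h1, h2⟩ := pat_im4c hF; rw [h1, h2]
  have q5a : ∀ F ∈ im5a starT (X := X),
      ((F.image Prod.fst).card, (F.image Prod.snd).card) = ((2 : ℕ), (3 : ℕ)) :=
    fun F hF => by obtain ⟨h1, h2⟩ := pat_im5a hF; rw [h1, h2]
  have q5b : ∀ F ∈ im5b starT (X := X),
      ((F.image Prod.fst).card, (F.image Prod.snd).card) = ((2 : ℕ), (3 : ℕ)) :=
    fun F hF => by obtain ⟨h1, h2⟩ := pat_im5b hF; rw [h1, h2]
  have q5c : ∀ F ∈ im5c starT (X := X),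
      ((F.image Prod.fst).card, (F.image Prod.snd).card) = ((2 : ℕ), (3 : ℕ)) :=
    fun F hF => by obtain ⟨h1, h2⟩ := pat_im5c hF; rw [h1, h2]
  have q6 : ∀ F ∈ (im6 : Finset (Finset (X × Y))),
      ((F.image Prod.fst).card, (F.image Prod.snd).card) = ((2 : ℕ), (2 : ℕ)) :=
    fun F hF => by obtain ⟨h1, h2⟩ := pat_im6 hF; rw [h1, h2]
  have qu : ∀ {A B : Finset (Finset (X × Y))} {pA pB : ℕ × ℕ},
      (∀ F ∈ A, ((F.image Prod.fst).card, (F.image Prod.snd).card) = pA) →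
      (∀ F ∈ B, ((F.image Prod.fst).card, (F.image Prod.snd).card) = pB) →
      ∀ F ∈ A ∪ B, ((F.image Prod.fst).card, (F.image Prod.snd).card) = pA ∨
        ((F.image Prod.fst).card, (F.image Prod.snd).card) = pB := by
    intro A B pA pB hA hB F hF
    rcases Finset.mem_union.mp hF with h | h
    exacts [Or.inl (hA F h), Or.inr (hB F h)]
  have D1 : Disjoint (im1 starT) (im2 starS (Y := Y)) := disj_aux q1 q2 (by decide)
  have D2 : Disjoint (im1 starT ∪ im2 starS) (im3 starS starT) := by
    rw [Finset.disjoint_union_left]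
    exact ⟨disj_aux q1 q3 (by decide), disj_aux q2 q3 (by decide)⟩
  have D3 : Disjoint (im1 starT ∪ im2 starS ∪ im3 starS starT) (im4a starS) := by
    rw [Finset.disjoint_union_left, Finset.disjoint_union_left]
    exact ⟨⟨disj_aux q1 q4a (by decide), disj_aux q2 q4a (by decide)⟩,
      disj_aux q3 q4a (by decide)⟩
  have D4 : Disjoint (im1 starT ∪ im2 starS ∪ im3 starS starT ∪ im4a starS)
      (im4b starS) := by
    rw [Finset.disjoint_union_left, Finset.disjoint_union_left,
      Finset.disjoint_union_left]
    exact ⟨⟨⟨disj_aux q1 q4b (by decide), disj_aux q2 q4b (by decide)⟩,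
      disj_aux q3 q4b (by decide)⟩, disj_im4ab hS⟩
  have D5 : Disjoint (im1 starT ∪ im2 starS ∪ im3 starS starT ∪ im4a starS ∪ im4b starS)
      (im4c starS) := by
    rw [Finset.disjoint_union_left, Finset.disjoint_union_left,
      Finset.disjoint_union_left, Finset.disjoint_union_left]
    exact ⟨⟨⟨⟨disj_aux q1 q4c (by decide), disj_aux q2 q4c (by decide)⟩,
      disj_aux q3 q4c (by decide)⟩, disj_im4ac hS⟩, disj_im4bc hS⟩
  have D6 : Disjoint (im1 starT ∪ im2 starS ∪ im3 starS starT ∪ im4a starS ∪ im4b starS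
      ∪ im4c starS) (im5a starT) := by
    rw [Finset.disjoint_union_left, Finset.disjoint_union_left,
      Finset.disjoint_union_left, Finset.disjoint_union_left,
      Finset.disjoint_union_left]
    exact ⟨⟨⟨⟨⟨disj_aux q1 q5a (by decide), disj_aux q2 q5a (by decide)⟩,
      disj_aux q3 q5a (by decide)⟩, disj_aux q4a q5a (by decide)⟩,
      disj_aux q4b q5a (by decide)⟩, disj_aux q4c q5a (by decide)⟩
  have D7 : Disjoint (im1 starT ∪ im2 starS ∪ im3 starS starT ∪ im4a starS ∪ im4b starS
      ∪ im4c starS ∪ im5a starT) (im5b starT) := by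
    rw [Finset.disjoint_union_left, Finset.disjoint_union_left,
      Finset.disjoint_union_left, Finset.disjoint_union_left,
      Finset.disjoint_union_left, Finset.disjoint_union_left]
    exact ⟨⟨⟨⟨⟨⟨disj_aux q1 q5b (by decide), disj_aux q2 q5b (by decide)⟩,
      disj_aux q3 q5b (by decide)⟩, disj_aux q4a q5b (by decide)⟩,
      disj_aux q4b q5b (by decide)⟩, disj_aux q4c q5b (by decide)⟩, disj_im5ab hT⟩
  have D8 : Disjoint (im1 starT ∪ im2 starS ∪ im3 starS starT ∪ im4a starS ∪ im4b starS
      ∪ im4c starS ∪ im5a starT ∪ im5b starT) (im5c starT) := by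
    rw [Finset.disjoint_union_left, Finset.disjoint_union_left,
      Finset.disjoint_union_left, Finset.disjoint_union_left,
      Finset.disjoint_union_left, Finset.disjoint_union_left,
      Finset.disjoint_union_left]
    exact ⟨⟨⟨⟨⟨⟨⟨disj_aux q1 q5c (by decide), disj_aux q2 q5c (by decide)⟩,
      disj_aux q3 q5c (by decide)⟩, disj_aux q4a q5c (by decide)⟩,
      disj_aux q4b q5c (by decide)⟩, disj_aux q4c q5c (by decide)⟩,
      disj_im5ac hT⟩, disj_im5bc hT⟩
  have D9 : Disjoint (im1 starT ∪ im2 starS ∪ im3 starS starT ∪ im4a starS ∪ im4b starS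
      ∪ im4c starS ∪ im5a starT ∪ im5b starT ∪ im5c starT)
      (im6 : Finset (Finset (X × Y))) := by
    rw [Finset.disjoint_union_left, Finset.disjoint_union_left,
      Finset.disjoint_union_left, Finset.disjoint_union_left,
      Finset.disjoint_union_left, Finset.disjoint_union_left,
      Finset.disjoint_union_left, Finset.disjoint_union_left]
    exact ⟨⟨⟨⟨⟨⟨⟨⟨disj_aux q1 q6 (by decide), disj_aux q2 q6 (by decide)⟩,
      disj_aux q3 q6 (by decide)⟩, disj_aux q4a q6 (by decide)⟩,
      disj_aux q4b q6 (by decide)⟩, disj_aux q4c q6 (by decide)⟩,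
      disj_aux q5a q6 (by decide)⟩, disj_aux q5b q6 (by decide)⟩,
      disj_aux q5c q6 (by decide)⟩
  rw [← card_BF, key, Finset.card_union_of_disjoint D9, Finset.card_union_of_disjoint D8,
    Finset.card_union_of_disjoint D7, Finset.card_union_of_disjoint D6,
    Finset.card_union_of_disjoint D5, Finset.card_union_of_disjoint D4,
    Finset.card_union_of_disjoint D3, Finset.card_union_of_disjoint D2,
    Finset.card_union_of_disjoint D1, card_im1 hT, card_im2 hS, card_im3 hS hT,
    card_im4a hS, card_im4b hS, card_im4c hS, card_im5a hT, card_im5b hT, card_im5c hT,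
    card_im6]

end Product

lemma choose2 (k : ℕ) : 2 * k.choose 2 + k = k * k := by
  induction k with
  | zero => rfl
  | succ n ih =>
    rw [Nat.choose_succ_succ, Nat.choose_one_right]
    calc 2 * (n + n.choose 2) + (n + 1)
        = (2 * n.choose 2 + n) + (n + n + 1) := by ring
      _ = n * n + (n + n + 1) := by rw [ih]
      _ = (n + 1) * (n + 1) := by ring


/-- The formula for `β(S × T)`. -/
theorem stmt12 {X Y : Type*} [Fintype X] [Fintype Y] [DecidableEq X] [DecidableEq Y]
    (starS : X → X → X) (starT : Y → Y → Y)
    (hS : IsSteinerQuasigroup starS) (hT : IsSteinerQuasigroup starT)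
    (m n : ℕ) (hm : Fintype.card X = m) (hn : Fintype.card Y = n) :
    betaInv (fun p q : X × Y => (starS p.1 q.1, starT p.2 q.2)) =
      6 * betaInv starS * betaInv starT
        + (6 * n.choose 2 + n) * betaInv starS
        + (6 * m.choose 2 + m) * betaInv starT
        + 4 * m.choose 2 * n.choose 2 := by
  subst hm; subst hn
  letI : LinearOrder X := LinearOrder.lift' (Fintype.equivFin X) (Fintype.equivFin X).injective
  letI : LinearOrder Y := LinearOrder.lift' (Fintype.equivFin Y) (Fintype.equivFin Y).injective
  have h0 : betaInv (fun p q : X × Y => (starS p.1 q.1, starT p.2 q.2)) =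
      betaInv (pstar starS starT) := rfl
  rw [h0, final_count hS hT]
  have cX : Fintype.card X * Fintype.card X - Fintype.card X =
      2 * (Fintype.card X).choose 2 := by
    rw [← choose2 (Fintype.card X), Nat.add_sub_cancel]
  have cY : Fintype.card Y * Fintype.card Y - Fintype.card Y =
      2 * (Fintype.card Y).choose 2 := by
    rw [← choose2 (Fintype.card Y), Nat.add_sub_cancel]
  rw [cX, cY]; ring
end
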